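/- arXiv:2007.01607 — 3 statements merged into one kernel-verified Lean document; each statement's English description precedes it below -/
import Mathlib

section
/- The equation δ² = (1−δ)/(1+δ), equivalently δ³ + δ² + δ − 1 = 0, has a unique solution δ* in (0,1). Moreover, for every δ ∈ (0, δ*) one has Φ_δ(0) > G_δ(0); in particular Φ_δ does not coincide identically with G_δ on (−1,0]. -/
open MeasureTheory Set Filter Real

/-- `Mn n x₀ E`: sup of `|P(x₀)|` over real polynomials of degree at most `n`
bounded by 1 on `E`. -/
noncomputable def Mn (n : ℕ) (x₀ : ℝ) (E : Set ℝ) : ℝ :=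
  sSup {y | ∃ P : Polynomial ℝ, P.natDegree ≤ n ∧ (∀ x ∈ E, |P.eval x| ≤ 1) ∧
    y = |P.eval x₀|}

/-- `Ln n δ x₀`: sup of `Mn n x₀ E` over closed subsets `E ⊆ [-1,1]` with
Lebesgue measure at least `2 - 2δ`. -/
noncomputable def Ln (n : ℕ) (δ : ℝ) (x₀ : ℝ) : ℝ :=
  sSup {y | ∃ E : Set ℝ, IsClosed E ∧ E ⊆ Icc (-1 : ℝ) 1 ∧
    2 - 2 * δ ≤ (volume E).toReal ∧ y = Mn n x₀ E}

/-- The two-interval set `E(α,δ) = [-1,1] \ (α-δ, α+δ)`. -/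
def Eset (α δ : ℝ) : Set ℝ := Icc (-1 : ℝ) 1 \ Ioo (α - δ) (α + δ)

/-- The critical point `c(α)` of the Green function of `ℂ̄ \ E(α,δ)` in the gap. -/
noncomputable def cpt (δ α : ℝ) : ℝ :=
  (∫ ξ in (α - δ)..(α + δ), ξ / Real.sqrt ((1 - ξ^2) * (ξ - (α - δ)) * ((α + δ) - ξ))) /
  (∫ ξ in (α - δ)..(α + δ), 1 / Real.sqrt ((1 - ξ^2) * (ξ - (α - δ)) * ((α + δ) - ξ)))

/-- The Green function `G_{α,δ}(x)` of `ℂ̄ \ E(α,δ)` with pole at `∞`,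
in the gap `(α-δ, α+δ)`. -/
noncomputable def Gtwo (δ α x : ℝ) : ℝ :=
  ∫ ξ in (α - δ)..x, (cpt δ α - ξ) / Real.sqrt ((1 - ξ^2) * (ξ - (α - δ)) * ((α + δ) - ξ))

/-- The Green function `G_δ(x)` of `ℂ̄ \ [-1+2δ, 1]` with pole at `∞`. -/
noncomputable def Gone (δ x : ℝ) : ℝ :=
  if x ≤ -1 + 2 * δ then
    Real.log ((δ - x) / (1 - δ) + Real.sqrt (((δ - x) / (1 - δ))^2 - 1))
  else 0

/-- The upper envelope `Φ_δ(x)`; `sSup ∅ = 0` in `ℝ`. -/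
noncomputable def Phi (δ x : ℝ) : ℝ :=
  max (Gone δ x)
    (sSup {y | ∃ α ∈ Ioc (δ - 1) (0 : ℝ), x ∈ Ioo (α - δ) (α + δ) ∧ y = Gtwo δ α x})

/-- `Cheb n y = ((y+√(y²−1))ⁿ + (y−√(y²−1))ⁿ)/2`, the Chebyshev polynomial of the
first kind for `y ≥ 1`. -/
noncomputable def Cheb (n : ℕ) (y : ℝ) : ℝ :=
  ((y + Real.sqrt (y^2 - 1))^n + (y - Real.sqrt (y^2 - 1))^n) / 2

open intervalIntegral

namespace Env7


lemma rpow_neg_half (y : ℝ) (hy : 0 ≤ y) : y ^ (-(1/2:ℝ)) = 1 / Real.sqrt y := by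
  rw [Real.rpow_neg hy, Real.sqrt_eq_rpow, one_div]
  norm_num

lemma int_rpow_left (a m : ℝ) :
    IntervalIntegrable (fun x => (x - a) ^ (-(1/2:ℝ))) volume a m := by
  have h := intervalIntegral.intervalIntegrable_rpow' (a := 0) (b := m - a)
    (r := -(1/2:ℝ)) (by norm_num)
  simpa using h.comp_sub_right a

lemma int_rpow_right (b m : ℝ) :
    IntervalIntegrable (fun x => (b - x) ^ (-(1/2:ℝ))) volume m b := by
  have h := intervalIntegral.intervalIntegrable_rpow' (a := b - m) (b := 0)
    (r := -(1/2:ℝ)) (by norm_num)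
  simpa using h.comp_sub_left b

lemma mydiv_le {a b c : ℝ} (h : a ≤ b) (hc : 0 ≤ c) : a / c ≤ b / c :=
  div_le_div_of_nonneg_right h hc

lemma meas_aux (a b p q : ℝ) :
    Measurable (fun ξ : ℝ => (p + q*ξ) / Real.sqrt ((1-ξ^2)*(ξ-a)*(b-ξ))) := by
  apply Measurable.div
  · fun_prop
  · exact (Real.continuous_sqrt.comp (by continuity)).measurable

lemma dominated_left {a m : ℝ} (h : a ≤ m) {f : ℝ → ℝ} (hf : Measurable f) (C : ℝ)
    (hb : ∀ x ∈ Set.Ioc a m, ‖f x‖ ≤ C * (x-a) ^ (-(1/2:ℝ))) :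
    IntervalIntegrable f volume a m := by
  apply ((int_rpow_left a m).const_mul C).mono_fun hf.aestronglyMeasurable
  rw [uIoc_of_le h]
  refine (ae_restrict_iff' measurableSet_Ioc).2 (Eventually.of_forall fun x hx => ?_)
  calc ‖f x‖ ≤ C * (x-a) ^ (-(1/2:ℝ)) := hb x hx
  _ ≤ ‖C * (x-a) ^ (-(1/2:ℝ))‖ := le_abs_self _

lemma dominated_right {m b : ℝ} (h : m ≤ b) {f : ℝ → ℝ} (hf : Measurable f) (C : ℝ)
    (hb : ∀ x ∈ Set.Ioc m b, ‖f x‖ ≤ C * (b-x) ^ (-(1/2:ℝ))) :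
    IntervalIntegrable f volume m b := by
  apply ((int_rpow_right b m).const_mul C).mono_fun hf.aestronglyMeasurable
  rw [uIoc_of_le h]
  refine (ae_restrict_iff' measurableSet_Ioc).2 (Eventually.of_forall fun x hx => ?_)
  calc ‖f x‖ ≤ C * (b-x) ^ (-(1/2:ℝ)) := hb x hx
  _ ≤ ‖C * (b-x) ^ (-(1/2:ℝ))‖ := le_abs_self _

lemma int_base {a b : ℝ} (ha : -1 < a) (hab : a < b) (hb : b < 1) :
    IntervalIntegrable (fun ξ => 1 / Real.sqrt ((1-ξ^2)*(ξ-a)*(b-ξ))) volume a b := by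
  set m := (a+b)/2 with hm
  have ham : a ≤ m := by rw [hm]; linarith
  have hmb : m ≤ b := by rw [hm]; linarith
  set K := (1-b)*(1+a)*((b-a)/2) with hK
  have hKpos : (0:ℝ) < K := by
    have h1 : (0:ℝ) < 1 - b := by linarith
    have h2 : (0:ℝ) < 1 + a := by linarith
    have h3 : (0:ℝ) < (b-a)/2 := by linarith
    positivity
  have hsK : 0 < Real.sqrt K := Real.sqrt_pos.2 hKpos
  have hmeas : Measurable (fun ξ : ℝ => 1 / Real.sqrt ((1-ξ^2)*(ξ-a)*(b-ξ))) := by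
    simpa using meas_aux a b 1 0
  have hL : IntervalIntegrable (fun ξ => 1 / Real.sqrt ((1-ξ^2)*(ξ-a)*(b-ξ))) volume a m := by
    apply dominated_left ham hmeas (1 / Real.sqrt K)
    intro x hx
    have hxa : 0 < x - a := by linarith [hx.1]
    have hP : K * (x-a) ≤ (1-x^2)*(x-a)*(b-x) := by
      have h1 : (0:ℝ) < 1 - b := by linarith
      have h2 : (0:ℝ) < 1 + a := by linarith
      have h4 : (b-a)/2 ≤ b - x := by rw [hm] at hx; have := hx.2; linarith
      have h5 : 1 - b ≤ 1 - x := by rw [hm] at hx; have := hx.2; linarith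
      have h6 : 1 + a ≤ 1 + x := by linarith [hx.1]
      have e : (1-x^2) = (1-x)*(1+x) := by ring
      rw [e, hK]
      have hx1 : 0 < 1 - x := by linarith
      have hx2 : 0 < 1 + x := by linarith
      have hAB : (1-b)*(1+a) ≤ (1-x)*(1+x) := by nlinarith
      have hbx : 0 < b - x := by linarith
      have s1 : (1-b)*(1+a)*(x-a)*((b-a)/2) ≤ (1-b)*(1+a)*(x-a)*(b-x) :=
        mul_le_mul_of_nonneg_left h4 (mul_nonneg (mul_nonneg h1.le h2.le) hxa.le)
      have s2 : (1-b)*(1+a)*((x-a)*(b-x)) ≤ (1-x)*(1+x)*((x-a)*(b-x)) :=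
        mul_le_mul_of_nonneg_right hAB (mul_nonneg hxa.le hbx.le)
      linarith [s1, s2]
    have hsq : Real.sqrt K * Real.sqrt (x-a) ≤ Real.sqrt ((1-x^2)*(x-a)*(b-x)) := by
      rw [← Real.sqrt_mul hKpos.le]
      exact Real.sqrt_le_sqrt hP
    have hpos : 0 < Real.sqrt K * Real.sqrt (x-a) := by positivity
    rw [Real.norm_eq_abs, abs_of_nonneg (by positivity), rpow_neg_half _ hxa.le,
      div_mul_div_comm, one_mul]
    exact one_div_le_one_div_of_le hpos hsq
  have hR : IntervalIntegrable (fun ξ => 1 / Real.sqrt ((1-ξ^2)*(ξ-a)*(b-ξ))) volume m b := by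
    apply dominated_right hmb hmeas (1 / Real.sqrt K)
    intro x hx
    have hbx0 : 0 ≤ b - x := by linarith [hx.2]
    rcases eq_or_lt_of_le hbx0 with hxb | hxb
    · have hxb' : x = b := by linarith
      subst hxb'
      simp [sub_self, Real.zero_rpow (show -(1/2:ℝ) ≠ 0 by norm_num)]
    have hP : K * (b-x) ≤ (1-x^2)*(x-a)*(b-x) := by
      have h1 : (0:ℝ) < 1 - b := by linarith
      have h2 : (0:ℝ) < 1 + a := by linarith
      have h4 : (b-a)/2 ≤ x - a := by rw [hm] at hx; have := hx.1; linarith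
      have h5 : 1 - b ≤ 1 - x := by linarith [hx.2]
      have h6 : 1 + a ≤ 1 + x := by rw [hm] at hx; have := hx.1; linarith
      have e : (1-x^2) = (1-x)*(1+x) := by ring
      rw [e, hK]
      have hx1 : 0 < 1 - x := by linarith
      have hx2 : 0 < 1 + x := by linarith
      have hAB : (1-b)*(1+a) ≤ (1-x)*(1+x) := by nlinarith
      have s1 : (1-b)*(1+a)*(b-x)*((b-a)/2) ≤ (1-b)*(1+a)*(b-x)*(x-a) :=
        mul_le_mul_of_nonneg_left h4 (mul_nonneg (mul_nonneg h1.le h2.le) hbx0)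
      have s2 : (1-b)*(1+a)*((x-a)*(b-x)) ≤ (1-x)*(1+x)*((x-a)*(b-x)) :=
        mul_le_mul_of_nonneg_right hAB (mul_nonneg (by linarith) hbx0)
      linarith [s1, s2]
    have hsq : Real.sqrt K * Real.sqrt (b-x) ≤ Real.sqrt ((1-x^2)*(x-a)*(b-x)) := by
      rw [← Real.sqrt_mul hKpos.le]
      exact Real.sqrt_le_sqrt hP
    have hpos : 0 < Real.sqrt K * Real.sqrt (b-x) := by
      have : 0 < Real.sqrt (b-x) := Real.sqrt_pos.2 hxb
      positivity
    rw [Real.norm_eq_abs, abs_of_nonneg (by positivity), rpow_neg_half _ hbx0,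
      div_mul_div_comm, one_mul]
    exact one_div_le_one_div_of_le hpos hsq
  exact hL.trans hR

lemma int_lin {a b : ℝ} (ha : -1 < a) (hab : a < b) (hb : b < 1) (p q : ℝ) :
    IntervalIntegrable (fun ξ => (p + q*ξ) / Real.sqrt ((1-ξ^2)*(ξ-a)*(b-ξ))) volume a b := by
  apply ((int_base ha hab hb).const_mul (|p|+|q|)).mono_fun
    (meas_aux a b p q).aestronglyMeasurable
  rw [uIoc_of_le hab.le]
  refine (ae_restrict_iff' measurableSet_Ioc).2 (Eventually.of_forall fun x hx => ?_)
  have hx1 : |x| ≤ 1 := by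
    rw [abs_le]; constructor <;> [linarith [hx.1]; linarith [hx.2]]
  have hnum : |p + q*x| ≤ |p| + |q| := by
    have h1 := abs_add_le p (q*x)
    rw [abs_mul] at h1
    nlinarith [abs_nonneg q]
  have hs : 0 ≤ Real.sqrt ((1-x^2)*(x-a)*(b-x)) := Real.sqrt_nonneg _
  show ‖(p + q*x) / Real.sqrt ((1-x^2)*(x-a)*(b-x))‖ ≤
    ‖(|p|+|q|) * (1 / Real.sqrt ((1-x^2)*(x-a)*(b-x)))‖
  rw [Real.norm_eq_abs, Real.norm_eq_abs, abs_div, abs_of_nonneg hs, mul_one_div,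
    abs_div, abs_of_nonneg (by positivity : (0:ℝ) ≤ |p|+|q|), abs_of_nonneg hs]
  exact mydiv_le hnum hs



lemma cpt_zero (δ : ℝ) : cpt δ 0 = 0 := by
  have hodd : ∀ x : ℝ,
      (-x) / Real.sqrt ((1 - (-x)^2) * ((-x) - (0 - δ)) * ((0 + δ) - (-x)))
      = - (x / Real.sqrt ((1 - x^2) * (x - (0 - δ)) * ((0 + δ) - x))) := by
    intro x
    rw [show (1 - (-x)^2) * ((-x) - (0 - δ)) * ((0 + δ) - (-x))
      = (1 - x^2) * (x - (0 - δ)) * ((0 + δ) - x) by ring, neg_div]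
  have h := intervalIntegral.integral_comp_neg (a := 0 - δ) (b := 0 + δ)
    (fun ξ => ξ / Real.sqrt ((1 - ξ^2) * (ξ - (0 - δ)) * ((0 + δ) - ξ)))
  simp only [hodd] at h
  rw [intervalIntegral.integral_neg] at h
  rw [show -(0 + δ) = 0 - δ by ring, show -(0 - δ) = 0 + δ by ring] at h
  have hz : (∫ ξ in (0 - δ)..(0 + δ),
      ξ / Real.sqrt ((1 - ξ^2) * (ξ - (0 - δ)) * ((0 + δ) - ξ))) = 0 := by linarith
  unfold cpt
  rw [hz, zero_div]

lemma deriv_F {δ : ℝ} (h0 : 0 < δ) (h1 : δ < 1) {x : ℝ} (hx : x ∈ Set.Ioo (-δ) 0) :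
    HasDerivAt (fun ξ => Real.log (Real.sqrt (1 - ξ^2) + Real.sqrt (δ^2 - ξ^2)))
      ((0 - x) / Real.sqrt ((1 - x^2) * (x - (0 - δ)) * ((0 + δ) - x))) x := by
  obtain ⟨hx1, hx2⟩ := hx
  have hxδ : x^2 < δ^2 := by nlinarith
  have hA : (0:ℝ) < 1 - x^2 := by nlinarith
  have hB : (0:ℝ) < δ^2 - x^2 := by linarith
  have hApos : 0 < Real.sqrt (1 - x^2) := Real.sqrt_pos.2 hA
  have hBpos : 0 < Real.sqrt (δ^2 - x^2) := Real.sqrt_pos.2 hB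
  have hA2 : Real.sqrt (1 - x^2) ^ 2 = 1 - x^2 := Real.sq_sqrt hA.le
  have hB2 : Real.sqrt (δ^2 - x^2) ^ 2 = δ^2 - x^2 := Real.sq_sqrt hB.le
  have dA : HasDerivAt (fun ξ : ℝ => Real.sqrt (1 - ξ^2))
      ((-(2*x)) / (2 * Real.sqrt (1 - x^2))) x := by
    have hinner : HasDerivAt (fun ξ : ℝ => 1 - ξ^2) (-(2*x)) x := by
      have h := ((hasDerivAt_pow 2 x).const_sub 1)
      norm_num at h
      exact h
    exact hinner.sqrt (ne_of_gt hA)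
  have dB : HasDerivAt (fun ξ : ℝ => Real.sqrt (δ^2 - ξ^2))
      ((-(2*x)) / (2 * Real.sqrt (δ^2 - x^2))) x := by
    have hinner : HasDerivAt (fun ξ : ℝ => δ^2 - ξ^2) (-(2*x)) x := by
      have h := ((hasDerivAt_pow 2 x).const_sub (δ^2))
      norm_num at h
      exact h
    exact hinner.sqrt (ne_of_gt hB)
  have dS := dA.add dB
  have hSpos : 0 < Real.sqrt (1 - x^2) + Real.sqrt (δ^2 - x^2) := by linarith
  have dlog := dS.log (ne_of_gt hSpos)
  convert dlog using 1
  · rfl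
  have harg : (1 - x^2) * (x - (0 - δ)) * ((0 + δ) - x) = (1 - x^2) * (δ^2 - x^2) := by ring
  rw [harg, Real.sqrt_mul hA.le]
  set A := Real.sqrt (1 - x^2)
  set B := Real.sqrt (δ^2 - x^2)
  simp only [Pi.add_apply]
  field_simp
  nlinarith [hA2, hB2, sq_nonneg (A*B), mul_pos hApos hBpos]

lemma gtwo_zero_eval {δ : ℝ} (h0 : 0 < δ) (h1 : δ < 1) :
    Gtwo δ 0 0 = Real.log ((1+δ)/(1-δ)) / 2 := by
  unfold Gtwo
  rw [cpt_zero]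
  have hδ1 : -1 < 0 - δ := by linarith
  have hδ2 : (0:ℝ) - δ < 0 + δ := by linarith
  have hδ3 : (0:ℝ) + δ < 1 := by linarith
  have hil := int_lin hδ1 hδ2 hδ3 0 (-1)
  have heq : (fun ξ : ℝ => ((0:ℝ) + (-1)*ξ) / Real.sqrt ((1-ξ^2)*(ξ-(0-δ))*((0+δ)-ξ)))
      = (fun ξ : ℝ => (0 - ξ) / Real.sqrt ((1-ξ^2)*(ξ-(0-δ))*((0+δ)-ξ))) := by
    funext ξ; norm_num
  rw [heq] at hil
  have hint : IntervalIntegrable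
      (fun ξ : ℝ => (0 - ξ) / Real.sqrt ((1-ξ^2)*(ξ-(0-δ))*((0+δ)-ξ))) volume (0-δ) 0 := by
    apply hil.mono_set
    rw [uIcc_of_le (by linarith), uIcc_of_le (by linarith)]
    exact Icc_subset_Icc le_rfl (by linarith)
  have hcont : ContinuousOn
      (fun ξ : ℝ => Real.log (Real.sqrt (1 - ξ^2) + Real.sqrt (δ^2 - ξ^2))) (Icc (0-δ) 0) := by
    apply ContinuousOn.log
    · exact ((Real.continuous_sqrt.comp (by continuity)).add
        (Real.continuous_sqrt.comp (by continuity))).continuousOn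
    · intro x hx
      have hx1 := hx.1
      have hx2 := hx.2
      have : 0 < Real.sqrt (1 - x^2) := Real.sqrt_pos.2 (by nlinarith)
      have := Real.sqrt_nonneg (δ^2 - x^2)
      intro hc; linarith
  have hderiv : ∀ x ∈ Ioo (0-δ) 0,
      HasDerivWithinAt (fun ξ : ℝ => Real.log (Real.sqrt (1 - ξ^2) + Real.sqrt (δ^2 - ξ^2)))
        ((0 - x) / Real.sqrt ((1 - x^2) * (x - (0 - δ)) * ((0 + δ) - x))) (Ioi x) x := by
    intro x hx
    rw [zero_sub] at hx
    exact (deriv_F h0 h1 hx).hasDerivWithinAt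
  rw [intervalIntegral.integral_eq_sub_of_hasDeriv_right_of_le (by linarith) hcont hderiv hint]
  have e0 : (1:ℝ) - 0^2 = 1 := by norm_num
  have e1 : δ^2 - 0^2 = δ^2 := by norm_num
  have e2 : (1:ℝ) - (0-δ)^2 = 1 - δ^2 := by ring
  have e3 : δ^2 - (0-δ)^2 = 0 := by ring
  rw [e0, e1, e2, e3, Real.sqrt_one, Real.sqrt_sq h0.le, Real.sqrt_zero, add_zero,
    Real.log_sqrt (by nlinarith : (0:ℝ) ≤ 1-δ^2),
    show (1:ℝ)-δ^2 = (1+δ)*(1-δ) by ring,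
    Real.log_mul (by linarith) (by linarith),
    Real.log_div (by linarith) (by linarith)]
  ring

lemma gone_lt {d δ : ℝ} (hd0 : 0 < d) (hd1 : d < 1) (hroot : d^3 + d^2 + d - 1 = 0)
    (h0 : 0 < δ) (hδd : δ < d) :
    Gone δ 0 < Real.log ((1+δ)/(1-δ)) / 2 := by
  have h1 : δ < 1 := by linarith
  have h1δ : (0:ℝ) < 1 - δ := by linarith
  have hu1 : (1:ℝ) < (1+δ)/(1-δ) := by
    rw [lt_div_iff₀ h1δ]; linarith
  have hlogpos : 0 < Real.log ((1+δ)/(1-δ)) := Real.log_pos hu1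
  unfold Gone
  by_cases hc : (0:ℝ) ≤ -1 + 2*δ
  · rw [if_pos hc]
    simp only [sub_zero]
    set y := δ / (1-δ) with hy
    have hy1 : 1 ≤ y := by
      rw [hy, le_div_iff₀ h1δ]; linarith
    have hy2 : 0 ≤ y^2 - 1 := by nlinarith
    set u := (1+δ)/(1-δ) with hu
    set t := Real.sqrt u with ht
    have hupos : 0 < u := by positivity
    have htpos : 0 < t := Real.sqrt_pos.2 hupos
    have ht2 : t^2 = u := Real.sq_sqrt hupos.le
    -- δ^3 + δ^2 + δ < 1 since δ < d and d is the root
    have hcub : δ^3 + δ^2 + δ < 1 := by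
      nlinarith [mul_pos (sub_pos.2 hδd) (show (0:ℝ) < d^2 + d*δ + δ^2 by positivity)]
    -- δ * t < 1
    have hδt : δ * t < 1 := by
      have hsq : (δ*t)^2 < 1 := by
        have : δ^2 * u < 1 := by
          rw [hu, show δ^2*((1+δ)/(1-δ)) = (δ^2*(1+δ))/(1-δ) by ring, div_lt_one h1δ]
          nlinarith
        calc (δ*t)^2 = δ^2 * t^2 := by ring
        _ = δ^2 * u := by rw [ht2]
        _ < 1 := this
      nlinarith [mul_pos h0 htpos]
    -- y < t
    have hyt : y < t := by
      have hy2u : y^2 < u := by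
        rw [hy, hu, div_pow, div_lt_div_iff₀ (by positivity) h1δ]
        nlinarith
      nlinarith [htpos, hy1]
    -- key : 2*t*y < u + 1
    have hkey : 2*t*y < u + 1 := by
      have hue : u + 1 = 2/(1-δ) := by rw [hu]; field_simp; ring
      have : 2*t*y = 2*(δ*t)/(1-δ) := by rw [hy]; field_simp
      rw [this, hue, div_lt_div_iff₀ h1δ h1δ]
      nlinarith
    -- √(y²-1) < t - y
    have hs : Real.sqrt (y^2-1) < t - y := by
      have h2 : y^2 - 1 < (t-y)^2 := by nlinarith [ht2]
      calc Real.sqrt (y^2-1) < Real.sqrt ((t-y)^2) := Real.sqrt_lt_sqrt hy2 h2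
      _ = t - y := Real.sqrt_sq (by linarith)
    have harg : 0 < y + Real.sqrt (y^2-1) := by
      have := Real.sqrt_nonneg (y^2-1); linarith
    have hlt : y + Real.sqrt (y^2-1) < t := by linarith
    calc Real.log (y + Real.sqrt (y^2-1)) < Real.log t := Real.log_lt_log harg hlt
    _ = Real.log u / 2 := by rw [ht, Real.log_sqrt hupos.le]
  · rw [if_neg hc]
    linarith

set_option maxHeartbeats 2000000 in
lemma gtwo_le {δ α : ℝ} (h0 : 0 < δ) (h1 : δ < 1) (hα1 : δ - 1 < α) (hα2 : α ≤ 0)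
    (hα3 : -δ < α) :
    Gtwo δ α 0 ≤ 2 * (δ * (1 / Real.sqrt ((1-δ)*δ))
      + (Real.sqrt (2*δ)/(1-δ)) * (2*Real.sqrt δ)) := by
  have ha : -1 < α - δ := by linarith
  have hab : α - δ < α + δ := by linarith
  have hb : α + δ < 1 := by linarith
  have ha0 : α - δ < 0 := by linarith
  have hb0 : (0:ℝ) < α + δ := by linarith
  have haα : α - δ < α := by linarith
  have hαb : α < α + δ := by linarith
  have hbδ : α + δ ≤ δ := by linarith
  have h1δ : (0:ℝ) < 1 - δ := by linarith
  set a := α - δ with ha_def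
  set b := α + δ with hb_def
  -- integrability facts
  have hD_int : IntervalIntegrable
      (fun ξ => 1 / Real.sqrt ((1-ξ^2)*(ξ-a)*(b-ξ))) volume a b := by
    have h := int_lin ha hab hb 1 0
    have he : (fun ξ : ℝ => ((1:ℝ) + 0*ξ) / Real.sqrt ((1-ξ^2)*(ξ-a)*(b-ξ)))
        = (fun ξ : ℝ => 1 / Real.sqrt ((1-ξ^2)*(ξ-a)*(b-ξ))) := by
      funext ξ; norm_num
    rwa [he] at h
  have hN_int : IntervalIntegrable
      (fun ξ => ξ / Real.sqrt ((1-ξ^2)*(ξ-a)*(b-ξ))) volume a b := by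
    have h := int_lin ha hab hb 0 1
    have he : (fun ξ : ℝ => ((0:ℝ) + 1*ξ) / Real.sqrt ((1-ξ^2)*(ξ-a)*(b-ξ)))
        = (fun ξ : ℝ => ξ / Real.sqrt ((1-ξ^2)*(ξ-a)*(b-ξ))) := by
      funext ξ; norm_num
    rwa [he] at h
  have hI_int : IntervalIntegrable
      (fun ξ => (ξ-a) / Real.sqrt ((1-ξ^2)*(ξ-a)*(b-ξ))) volume a b := by
    have h := int_lin ha hab hb (-a) 1
    have he : (fun ξ : ℝ => (-a + 1*ξ) / Real.sqrt ((1-ξ^2)*(ξ-a)*(b-ξ)))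
        = (fun ξ : ℝ => (ξ-a) / Real.sqrt ((1-ξ^2)*(ξ-a)*(b-ξ))) := by
      funext ξ; congr 1; ring
    rwa [he] at h
  set c := cpt δ α with hc_def
  have hc_int : IntervalIntegrable
      (fun ξ => (c-ξ) / Real.sqrt ((1-ξ^2)*(ξ-a)*(b-ξ))) volume a b := by
    have h := int_lin ha hab hb c (-1)
    have he : (fun ξ : ℝ => (c + (-1)*ξ) / Real.sqrt ((1-ξ^2)*(ξ-a)*(b-ξ)))
        = (fun ξ : ℝ => (c-ξ) / Real.sqrt ((1-ξ^2)*(ξ-a)*(b-ξ))) := by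
      funext ξ; congr 1; ring
    rwa [he] at h
  -- subsets
  have subset0 : uIcc a (0:ℝ) ⊆ uIcc a b := by
    rw [uIcc_of_le ha0.le, uIcc_of_le hab.le]; exact Icc_subset_Icc le_rfl hb0.le
  have subsetα : uIcc a α ⊆ uIcc a b := by
    rw [uIcc_of_le haα.le, uIcc_of_le hab.le]; exact Icc_subset_Icc le_rfl hαb.le
  have subsetαb : uIcc α b ⊆ uIcc a b := by
    rw [uIcc_of_le hαb.le, uIcc_of_le hab.le]; exact Icc_subset_Icc haα.le le_rfl
  have subset0b : uIcc (0:ℝ) b ⊆ uIcc a b := by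
    rw [uIcc_of_le hb0.le, uIcc_of_le hab.le]; exact Icc_subset_Icc ha0.le le_rfl
  -- positivity of D
  have hDpos : 0 < ∫ ξ in a..b, 1 / Real.sqrt ((1-ξ^2)*(ξ-a)*(b-ξ)) := by
    apply intervalIntegral_pos_of_pos_on hD_int _ hab
    intro x hx
    have hP : 0 < (1-x^2)*(x-a)*(b-x) := by
      have h1 : 0 < 1 - x^2 := by nlinarith [hx.1, hx.2]
      have h2 : 0 < x - a := by linarith [hx.1]
      have h3 : 0 < b - x := by linarith [hx.2]
      positivity
    have := Real.sqrt_pos.2 hP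
    positivity
  have hI_nonneg : 0 ≤ ∫ ξ in a..b, (ξ-a) / Real.sqrt ((1-ξ^2)*(ξ-a)*(b-ξ)) := by
    apply intervalIntegral.integral_nonneg hab.le
    intro x hx
    exact div_nonneg (by linarith [hx.1]) (Real.sqrt_nonneg _)
  -- N = I + a D
  have hNID : (∫ ξ in a..b, ξ / Real.sqrt ((1-ξ^2)*(ξ-a)*(b-ξ)))
      = (∫ ξ in a..b, (ξ-a) / Real.sqrt ((1-ξ^2)*(ξ-a)*(b-ξ)))
      + a * ∫ ξ in a..b, 1 / Real.sqrt ((1-ξ^2)*(ξ-a)*(b-ξ)) := by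
    have he : (fun ξ : ℝ => ξ / Real.sqrt ((1-ξ^2)*(ξ-a)*(b-ξ)))
        = (fun ξ : ℝ => (ξ-a) / Real.sqrt ((1-ξ^2)*(ξ-a)*(b-ξ))
            + a * (1 / Real.sqrt ((1-ξ^2)*(ξ-a)*(b-ξ)))) := by
      funext ξ
      rw [mul_one_div, ← add_div, sub_add_cancel]
    rw [he, intervalIntegral.integral_add hI_int (hD_int.const_mul a),
      intervalIntegral.integral_const_mul]
  -- c - a = I / D
  have hc_val : c = (∫ ξ in a..b, ξ / Real.sqrt ((1-ξ^2)*(ξ-a)*(b-ξ)))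
      / ∫ ξ in a..b, 1 / Real.sqrt ((1-ξ^2)*(ξ-a)*(b-ξ)) := by
    rw [hc_def]; rfl
  have hc_eq : c - a = (∫ ξ in a..b, (ξ-a) / Real.sqrt ((1-ξ^2)*(ξ-a)*(b-ξ)))
      / ∫ ξ in a..b, 1 / Real.sqrt ((1-ξ^2)*(ξ-a)*(b-ξ)) := by
    rw [hc_val, hNID]
    field_simp
    ring
  have hca : 0 ≤ c - a := by
    rw [hc_eq]; exact div_nonneg hI_nonneg hDpos.le
  -- step 1: pointwise bound on [a,0]
  have step1 : Gtwo δ α 0 ≤ ∫ ξ in a..0, ((c-a) * (1 / Real.sqrt ((1-ξ^2)*(ξ-a)*(b-ξ)))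
      + (ξ-a) / Real.sqrt ((1-ξ^2)*(ξ-a)*(b-ξ))) := by
    have hG : Gtwo δ α 0 = ∫ ξ in a..0, (c-ξ) / Real.sqrt ((1-ξ^2)*(ξ-a)*(b-ξ)) := rfl
    rw [hG]
    apply intervalIntegral.integral_mono_on ha0.le (hc_int.mono_set subset0)
      (((hD_int.const_mul (c-a)).add hI_int).mono_set subset0)
    intro x hx
    rw [mul_one_div, ← add_div]
    apply mydiv_le _ (Real.sqrt_nonneg _)
    linarith [hx.1]
  -- step 2: split integral
  have step2 : (∫ ξ in a..0, ((c-a) * (1 / Real.sqrt ((1-ξ^2)*(ξ-a)*(b-ξ)))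
      + (ξ-a) / Real.sqrt ((1-ξ^2)*(ξ-a)*(b-ξ))))
      = (c-a) * (∫ ξ in a..0, 1 / Real.sqrt ((1-ξ^2)*(ξ-a)*(b-ξ)))
        + ∫ ξ in a..0, (ξ-a) / Real.sqrt ((1-ξ^2)*(ξ-a)*(b-ξ)) := by
    rw [intervalIntegral.integral_add ((hD_int.mono_set subset0).const_mul (c-a))
      (hI_int.mono_set subset0), intervalIntegral.integral_const_mul]
  -- step 3
  have step3 : (∫ ξ in a..0, 1 / Real.sqrt ((1-ξ^2)*(ξ-a)*(b-ξ)))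
      ≤ ∫ ξ in a..b, 1 / Real.sqrt ((1-ξ^2)*(ξ-a)*(b-ξ)) := by
    have hsplit := intervalIntegral.integral_add_adjacent_intervals
      (hD_int.mono_set subset0) (hD_int.mono_set subset0b)
    have h2 : 0 ≤ ∫ ξ in (0:ℝ)..b, 1 / Real.sqrt ((1-ξ^2)*(ξ-a)*(b-ξ)) := by
      apply intervalIntegral.integral_nonneg hb0.le
      intro x hx
      positivity
    linarith
  have step4 : (∫ ξ in a..0, (ξ-a) / Real.sqrt ((1-ξ^2)*(ξ-a)*(b-ξ)))
      ≤ ∫ ξ in a..b, (ξ-a) / Real.sqrt ((1-ξ^2)*(ξ-a)*(b-ξ)) := by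
    have hsplit := intervalIntegral.integral_add_adjacent_intervals
      (hI_int.mono_set subset0) (hI_int.mono_set subset0b)
    have h2 : 0 ≤ ∫ ξ in (0:ℝ)..b, (ξ-a) / Real.sqrt ((1-ξ^2)*(ξ-a)*(b-ξ)) := by
      apply intervalIntegral.integral_nonneg hb0.le
      intro x hx
      exact div_nonneg (by linarith [hx.1]) (Real.sqrt_nonneg _)
    linarith
  have step5 : (c-a) * (∫ ξ in a..0, 1 / Real.sqrt ((1-ξ^2)*(ξ-a)*(b-ξ)))
      ≤ ∫ ξ in a..b, (ξ-a) / Real.sqrt ((1-ξ^2)*(ξ-a)*(b-ξ)) := by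
    calc (c-a) * (∫ ξ in a..0, 1 / Real.sqrt ((1-ξ^2)*(ξ-a)*(b-ξ)))
        ≤ (c-a) * (∫ ξ in a..b, 1 / Real.sqrt ((1-ξ^2)*(ξ-a)*(b-ξ))) :=
          mul_le_mul_of_nonneg_left step3 hca
    _ = ∫ ξ in a..b, (ξ-a) / Real.sqrt ((1-ξ^2)*(ξ-a)*(b-ξ)) := by
          rw [hc_eq, div_mul_cancel₀ _ hDpos.ne']
  -- bound I
  have Isplit := intervalIntegral.integral_add_adjacent_intervals
    (hI_int.mono_set subsetα) (hI_int.mono_set subsetαb)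
  have bound1 : (∫ ξ in a..α, (ξ-a) / Real.sqrt ((1-ξ^2)*(ξ-a)*(b-ξ)))
      ≤ δ * (1 / Real.sqrt ((1-δ)*δ)) := by
    have hmono : (∫ ξ in a..α, (ξ-a) / Real.sqrt ((1-ξ^2)*(ξ-a)*(b-ξ)))
        ≤ ∫ _ in a..α, 1 / Real.sqrt ((1-δ)*δ) := by
      apply intervalIntegral.integral_mono_on haα.le (hI_int.mono_set subsetα)
        intervalIntegrable_const
      intro x hx
      have hx1 := hx.1
      have hx2 := hx.2
      have hxa : 0 ≤ x - a := by linarith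
      rcases eq_or_lt_of_le hxa with hxa' | hxa'
      · rw [← hxa', zero_div]
        positivity
      have hKP : ((1-δ)*δ)*(x-a)^2 ≤ (1-x^2)*(x-a)*(b-x) := by
        have hbx : δ ≤ b - x := by rw [hb_def]; linarith
        have h1x : 1 - δ ≤ 1 - x := by linarith
        have h2x : x - a ≤ 1 + x := by rw [ha_def]; linarith
        have s1 : (1-δ)*(x-a) ≤ (1-x)*(1+x) :=
          mul_le_mul h1x h2x hxa (by linarith)
        have s2 : (1-δ)*(x-a)*((x-a)*(b-x)) ≤ (1-x)*(1+x)*((x-a)*(b-x)) :=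
          mul_le_mul_of_nonneg_right s1 (mul_nonneg hxa (by linarith))
        have s3 : (1-δ)*(x-a)^2*δ ≤ (1-δ)*(x-a)^2*(b-x) :=
          mul_le_mul_of_nonneg_left hbx (by positivity)
        nlinarith [s2, s3]

      have hsq : Real.sqrt ((1-δ)*δ) * (x-a) ≤ Real.sqrt ((1-x^2)*(x-a)*(b-x)) := by
        have h := Real.sqrt_le_sqrt hKP
        rwa [Real.sqrt_mul (by positivity) ((x-a)^2), Real.sqrt_sq hxa] at h
      have hpos : 0 < Real.sqrt ((1-δ)*δ) * (x-a) := by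
        have : 0 < Real.sqrt ((1-δ)*δ) := Real.sqrt_pos.2 (by positivity)
        positivity
      calc (x-a) / Real.sqrt ((1-x^2)*(x-a)*(b-x))
          ≤ (x-a) / (Real.sqrt ((1-δ)*δ) * (x-a)) :=
            div_le_div_of_nonneg_left hxa hpos hsq
      _ = 1 / Real.sqrt ((1-δ)*δ) := by
            rw [mul_comm (Real.sqrt ((1-δ)*δ)) (x-a), ← div_div, div_self hxa'.ne']
    rw [intervalIntegral.integral_const, smul_eq_mul,
      show α - a = δ by rw [ha_def]; ring] at hmono
    exact hmono
  have bound2 : (∫ ξ in α..b, (ξ-a) / Real.sqrt ((1-ξ^2)*(ξ-a)*(b-ξ)))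
      ≤ (Real.sqrt (2*δ)/(1-δ)) * (2*Real.sqrt δ) := by
    have hmono : (∫ ξ in α..b, (ξ-a) / Real.sqrt ((1-ξ^2)*(ξ-a)*(b-ξ)))
        ≤ ∫ ξ in α..b, (Real.sqrt (2*δ)/(1-δ)) * (b-ξ) ^ (-(1/2:ℝ)) := by
      apply intervalIntegral.integral_mono_on hαb.le (hI_int.mono_set subsetαb)
        ((int_rpow_right b α).const_mul _)
      intro x hx
      have hx1 := hx.1
      have hx2 := hx.2
      rcases eq_or_lt_of_le hx2 with hxb | hxb
      · rw [hxb]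
        simp [sub_self, Real.zero_rpow (show -(1/2:ℝ) ≠ 0 by norm_num)]
      have hxa : 0 < x - a := by linarith
      have hbx : 0 < b - x := by linarith
      have hPpos : 0 < (1-x^2)*(x-a)*(b-x) := by
        have hx2' : x^2 < 1 := by nlinarith
        have : 0 < 1 - x^2 := by linarith
        positivity
      have hsP : 0 < Real.sqrt ((1-x^2)*(x-a)*(b-x)) := Real.sqrt_pos.2 hPpos
      have hsbx : 0 < Real.sqrt (b-x) := Real.sqrt_pos.2 hbx
      rw [rpow_neg_half _ hbx.le, mul_one_div, div_le_div_iff₀ hsP hsbx]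
      -- (x-a)/√P ≤ (√(2δ)/(1-δ))/√(b-x) ↔ (x-a)*√(b-x) ≤ (√(2δ)/(1-δ))*√P
      have hfac : (1-δ)*Real.sqrt (x-a)*Real.sqrt (b-x)
          ≤ Real.sqrt ((1-x^2)*(x-a)*(b-x)) := by
        have hKP : ((1-δ)^2*(x-a))*(b-x) ≤ ((1-x^2)*(x-a))*(b-x) := by
          have l1 : 1 - δ ≤ 1 - x := by linarith
          have l2 : 1 - δ ≤ 1 + x := by linarith
          have : (1-δ)^2 ≤ 1-x^2 := by nlinarith
          have := mul_le_mul_of_nonneg_right this hxa.le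
          exact mul_le_mul_of_nonneg_right this hbx.le
        have h := Real.sqrt_le_sqrt hKP
        rwa [Real.sqrt_mul (by positivity) (b-x), Real.sqrt_mul (by positivity) (x-a),
          Real.sqrt_sq h1δ.le] at h
      have hxa2δ : x - a ≤ 2*δ := by rw [ha_def]; linarith
      have hstep : x - a ≤ Real.sqrt (2*δ) * Real.sqrt (x-a) := by
        have h' : Real.sqrt (x-a) ≤ Real.sqrt (2*δ) := Real.sqrt_le_sqrt hxa2δ
        calc x - a = Real.sqrt (x-a) * Real.sqrt (x-a) := (Real.mul_self_sqrt hxa.le).symm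
        _ ≤ Real.sqrt (2*δ) * Real.sqrt (x-a) :=
          mul_le_mul_of_nonneg_right h' (Real.sqrt_nonneg _)
      calc (x-a) * Real.sqrt (b-x)
          ≤ (Real.sqrt (2*δ) * Real.sqrt (x-a)) * Real.sqrt (b-x) :=
            mul_le_mul_of_nonneg_right hstep (Real.sqrt_nonneg _)
      _ = (Real.sqrt (2*δ)/(1-δ)) * ((1-δ)*Real.sqrt (x-a)*Real.sqrt (b-x)) := by
            field_simp
      _ ≤ (Real.sqrt (2*δ)/(1-δ)) * Real.sqrt ((1-x^2)*(x-a)*(b-x)) :=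
            mul_le_mul_of_nonneg_left hfac (by positivity)
    have hval : (∫ ξ in α..b, (b-ξ) ^ (-(1/2:ℝ))) = 2*Real.sqrt δ := by
      rw [intervalIntegral.integral_comp_sub_left (fun x => x ^ (-(1/2:ℝ))) b]
      rw [show b - b = (0:ℝ) by ring, show b - α = δ by rw [hb_def]; ring]
      rw [integral_rpow (Or.inl (by norm_num))]
      rw [show (-(1/2:ℝ)+1) = 1/2 by norm_num, Real.zero_rpow (by norm_num),
        ← Real.sqrt_eq_rpow]
      ring
    rw [intervalIntegral.integral_const_mul, hval] at hmono
    exact hmono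
  linarith [step1, step2, step3, step4, step5, Isplit, bound1, bound2]

lemma part1 : ∀ d ∈ Ioo (0 : ℝ) 1, d^2 = (1 - d) / (1 + d) ↔ d^3 + d^2 + d - 1 = 0 := by
  intro d hd
  have h1 : (0:ℝ) < 1 + d := by linarith [hd.1]
  rw [eq_div_iff (ne_of_gt h1)]
  constructor <;> intro h <;> nlinarith

end Env7

/-- the equation `δ² = (1−δ)/(1+δ)`, equivalently `δ³+δ²+δ−1 = 0`,
has a unique solution `δ*` in `(0,1)`, and for `δ < δ*` the envelope `Φ_δ` does not
coincide with `G_δ`: indeed `Φ_δ(0) > G_δ(0)`. -/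
theorem envelope_strictly_bigger_for_small_delta :
    (∀ d ∈ Ioo (0 : ℝ) 1, d^2 = (1 - d) / (1 + d) ↔ d^3 + d^2 + d - 1 = 0) ∧
    (∃! d : ℝ, d ∈ Ioo (0 : ℝ) 1 ∧ d^2 = (1 - d) / (1 + d)) ∧
    (∀ d : ℝ, d ∈ Ioo (0 : ℝ) 1 → d^2 = (1 - d) / (1 + d) →
      ∀ δ ∈ Ioo (0 : ℝ) d, Phi δ 0 > Gone δ 0 ∧
        ¬(∀ x ∈ Ioc (-1 : ℝ) (0 : ℝ), Phi δ x = Gone δ x)) := by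
  constructor
  · exact Env7.part1
  constructor
  · -- existence and uniqueness of the root
    have hcont : ContinuousOn (fun x : ℝ => x^3+x^2+x-1) (Icc 0 1) := by fun_prop
    have hmem0 : (0:ℝ) ∈ Ioo ((fun x : ℝ => x^3+x^2+x-1) 0) ((fun x : ℝ => x^3+x^2+x-1) 1) := by
      norm_num
    obtain ⟨d, hd, hfd⟩ := intermediate_value_Ioo (by norm_num : (0:ℝ) ≤ 1) hcont hmem0
    refine ⟨d, ⟨hd, (Env7.part1 d hd).2 hfd⟩, ?_⟩
    rintro e ⟨he, heq⟩
    have h1 : e^3+e^2+e-1 = 0 := (Env7.part1 e he).1 heq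
    have h2 : d^3+d^2+d-1 = 0 := hfd
    have key : (e - d) * (e^2 + e*d + d^2 + e + d + 1) = 0 := by linear_combination h1 - h2
    have hpos : 0 < e^2 + e*d + d^2 + e + d + 1 := by
      nlinarith [he.1, hd.1, mul_pos he.1 hd.1, sq_nonneg e, sq_nonneg d]
    rcases mul_eq_zero.1 key with h | h
    · linarith
    · linarith
  · intro d hd hd2 δ hδ
    have hδ0 := hδ.1
    have hδd := hδ.2
    have h1 : δ < 1 := by linarith [hd.2]
    have hroot : d^3+d^2+d-1 = 0 := (Env7.part1 d hd).1 hd2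
    have hkey : Gone δ 0 < Gtwo δ 0 0 := by
      rw [Env7.gtwo_zero_eval hδ0 h1]
      exact Env7.gone_lt hd.1 hd.2 hroot hδ0 hδd
    have hmem : Gtwo δ 0 0 ∈
        {y | ∃ α ∈ Ioc (δ - 1) (0 : ℝ), (0:ℝ) ∈ Ioo (α - δ) (α + δ) ∧ y = Gtwo δ α 0} :=
      ⟨0, ⟨by linarith, le_refl 0⟩, ⟨by linarith, by linarith⟩, rfl⟩
    have hbdd : BddAbove
        {y | ∃ α ∈ Ioc (δ - 1) (0 : ℝ), (0:ℝ) ∈ Ioo (α - δ) (α + δ) ∧ y = Gtwo δ α 0} := by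
      refine ⟨2 * (δ * (1 / Real.sqrt ((1-δ)*δ))
        + (Real.sqrt (2*δ)/(1-δ)) * (2*Real.sqrt δ)), ?_⟩
      rintro y ⟨α, hαmem, hx0, rfl⟩
      exact Env7.gtwo_le hδ0 h1 hαmem.1 hαmem.2 (by linarith [hx0.2])
    have hPhi : Gone δ 0 < Phi δ 0 := by
      have hle1 : Gtwo δ 0 0 ≤
          sSup {y | ∃ α ∈ Ioc (δ - 1) (0 : ℝ), (0:ℝ) ∈ Ioo (α - δ) (α + δ) ∧ y = Gtwo δ α 0} :=
        le_csSup hbdd hmem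
      have hle2 : sSup {y | ∃ α ∈ Ioc (δ - 1) (0 : ℝ),
          (0:ℝ) ∈ Ioo (α - δ) (α + δ) ∧ y = Gtwo δ α 0} ≤ Phi δ 0 := le_max_right _ _
      linarith
    refine ⟨hPhi, fun hall => ?_⟩
    have := hall 0 ⟨by norm_num, le_refl 0⟩
    linarith
end

section
/- For every n ∈ ℕ and δ ∈ (0,1), the Remez constant satisfies sup_{x₀ ∈ [−1,1]} L_{n,δ}(x₀) = 𝔗ₙ((1+δ)/(1−δ)): every polynomial P of degree at most n with |P| ≤ 1 on some closed set E ⊆ [−1,1] of Lebesgue measure |E| ≥ 2−2δ satisfies sup_{x ∈ [−1,1]} |P(x)| ≤ 𝔗ₙ((1+δ)/(1−δ)), and equality is attained at x₀ = −1 by the Remez polynomial R_{n,δ}(x) = 𝔗ₙ((δ−x)/(1−δ)) with E = [−1+2δ,1]. -/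
open MeasureTheory Set Filter Real

open Polynomial Finset

lemma chebT_cosh (t : ℝ) (n : ℤ) :
    (Polynomial.Chebyshev.T ℝ n).eval (Real.cosh t) = Real.cosh (n * t) := by
  have h1 : (((Polynomial.Chebyshev.T ℝ n).eval (Real.cosh t) : ℝ) : ℂ) =
      (Polynomial.Chebyshev.T ℂ n).eval (Complex.ofReal (Real.cosh t)) :=
    Polynomial.Chebyshev.complex_ofReal_eval_T _ n
  have h2 : Complex.ofReal (Real.cosh t) = Complex.cos (t * Complex.I) := by
    rw [Complex.cos_mul_I]; norm_cast
  rw [h2, Polynomial.Chebyshev.T_complex_cos] at h1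
  have h3 : (n : ℂ) * (t * Complex.I) = ((n * t : ℝ) : ℂ) * Complex.I := by push_cast; ring
  rw [h3, Complex.cos_mul_I] at h1
  have h4 : Complex.cosh ((n*t : ℝ) : ℂ) = Complex.ofReal (Real.cosh (n * t)) := by norm_cast
  rw [h4] at h1
  exact_mod_cast h1

lemma sqrt_sq_sub_one {y : ℝ} (hy : 1 ≤ y) :
    Real.sqrt (y^2 - 1) ^ 2 = y^2 - 1 :=
  Real.sq_sqrt (by nlinarith)

lemma inv_aux {y : ℝ} (hy : 1 ≤ y) :
    (y + Real.sqrt (y^2-1))⁻¹ = y - Real.sqrt (y^2-1) := by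
  have hs := sqrt_sq_sub_one hy
  have hpos : 0 < y + Real.sqrt (y^2-1) := by
    have := Real.sqrt_nonneg (y^2-1); linarith
  have hmul : (y + Real.sqrt (y^2-1)) * (y - Real.sqrt (y^2-1)) = 1 := by nlinarith
  exact inv_eq_of_mul_eq_one_right hmul

lemma cheb_eq_cosh {y : ℝ} (hy : 1 ≤ y) (n : ℕ) :
    Cheb n y = Real.cosh (n * Real.log (y + Real.sqrt (y^2-1))) := by
  have hpos : 0 < y + Real.sqrt (y^2-1) := by
    have := Real.sqrt_nonneg (y^2-1); linarith
  have hexp : Real.exp (Real.log (y + Real.sqrt (y^2-1))) = y + Real.sqrt (y^2-1) :=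
    Real.exp_log hpos
  rw [Real.cosh_eq, Cheb, Real.exp_nat_mul, Real.exp_neg, Real.exp_nat_mul, hexp, ← inv_pow,
    inv_aux hy]

lemma cosh_arg_eq {y : ℝ} (hy : 1 ≤ y) :
    Real.cosh (Real.log (y + Real.sqrt (y^2-1))) = y := by
  have hpos : 0 < y + Real.sqrt (y^2-1) := by
    have := Real.sqrt_nonneg (y^2-1); linarith
  rw [Real.cosh_eq, Real.exp_neg, Real.exp_log hpos, inv_aux hy]
  ring

lemma chebT_eval_eq_cheb {y : ℝ} (hy : 1 ≤ y) (n : ℕ) :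
    (Polynomial.Chebyshev.T ℝ (n:ℤ)).eval y = Cheb n y := by
  conv_lhs => rw [← cosh_arg_eq hy]
  rw [chebT_cosh, cheb_eq_cosh hy]
  norm_num

lemma cheb_one_le {y : ℝ} (hy : 1 ≤ y) (n : ℕ) : 1 ≤ Cheb n y := by
  rw [cheb_eq_cosh hy]; exact Real.one_le_cosh _

lemma cheb_mono (n : ℕ) {y z : ℝ} (hy : 1 ≤ y) (hz : y ≤ z) : Cheb n y ≤ Cheb n z := by
  have hz1 : 1 ≤ z := hy.trans hz
  rw [cheb_eq_cosh hy, cheb_eq_cosh hz1]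
  have harg : y + Real.sqrt (y^2-1) ≤ z + Real.sqrt (z^2-1) := by
    have : Real.sqrt (y^2-1) ≤ Real.sqrt (z^2-1) := by
      apply Real.sqrt_le_sqrt; nlinarith
    linarith
  have hposy : (1:ℝ) ≤ y + Real.sqrt (y^2-1) := by
    have := Real.sqrt_nonneg (y^2-1); linarith
  have hlog : Real.log (y + Real.sqrt (y^2-1)) ≤ Real.log (z + Real.sqrt (z^2-1)) :=
    Real.log_le_log (by linarith) harg
  have hlogy : 0 ≤ Real.log (y + Real.sqrt (y^2-1)) := Real.log_nonneg hposy
  have hlogz : 0 ≤ Real.log (z + Real.sqrt (z^2-1)) := hlogy.trans hlog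
  rw [Real.cosh_le_cosh]
  rw [abs_of_nonneg (mul_nonneg (Nat.cast_nonneg n) hlogy),
    abs_of_nonneg (mul_nonneg (Nat.cast_nonneg n) hlogz)]
  exact mul_le_mul_of_nonneg_left hlog (Nat.cast_nonneg n)

lemma natDegree_T_le : ∀ n : ℕ, (Polynomial.Chebyshev.T ℝ (n:ℤ)).natDegree ≤ n := by
  have H : ∀ n : ℕ, (Polynomial.Chebyshev.T ℝ (n:ℤ)).natDegree ≤ n ∧
      (Polynomial.Chebyshev.T ℝ ((n+1:ℕ):ℤ)).natDegree ≤ n+1 := by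
    intro n
    induction n with
    | zero =>
      constructor
      · simp [Polynomial.Chebyshev.T_zero]
      · norm_num [Polynomial.Chebyshev.T_one]
    | succ k ih =>
      refine ⟨ih.2, ?_⟩
      have h2 : ((k+2:ℕ):ℤ) = (k:ℤ) + 2 := by push_cast; ring
      rw [h2, Polynomial.Chebyshev.T_add_two]
      apply le_trans (Polynomial.natDegree_sub_le _ _)
      have h1 : (2 * Polynomial.X * Polynomial.Chebyshev.T ℝ ((k:ℤ)+1)).natDegree ≤ k + 2 := by
        apply le_trans (Polynomial.natDegree_mul_le)
        have : (2 * Polynomial.X : ℝ[X]).natDegree ≤ 1 := by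
          apply le_trans (Polynomial.natDegree_mul_le); simp
        have h3 : ((k:ℤ)+1) = ((k+1:ℕ):ℤ) := by push_cast; ring
        rw [h3]
        have := ih.2
        omega
      have h4 := ih.1
      simp only [max_le_iff]
      exact ⟨h1, by omega⟩
  exact fun n => (H n).1

-- sign lemma
lemma prod_erase_sign (n j : ℕ) (hj : j < n+1) (g : ℕ → ℝ) :
    (-1:ℝ)^j * ∏ i ∈ (Finset.range (n+1)).erase j, g i
      = ∏ i ∈ (Finset.range (n+1)).erase j, (if i < j then -g i else g i) := by
  have hpt : ∀ i ∈ (Finset.range (n+1)).erase j,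
      (if i < j then -g i else g i) = (if i < j then (-1:ℝ) else 1) * g i := by
    intro i _; split_ifs <;> ring
  rw [Finset.prod_congr rfl hpt, Finset.prod_mul_distrib]
  congr 1
  rw [Finset.prod_ite, Finset.prod_const, Finset.prod_const, one_pow, mul_one]
  congr 1
  have hfil : Finset.filter (fun i => i < j) ((Finset.range (n+1)).erase j) = Finset.range j := by
    ext i
    simp only [Finset.mem_filter, Finset.mem_erase, Finset.mem_range]
    omega
  rw [hfil, Finset.card_range]

-- Lagrange basis eval as product of quotients
lemma eval_lagrange_basis (s : Finset ℕ) (v : ℕ → ℝ) (j : ℕ) (x : ℝ) :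
    (Lagrange.basis s v j).eval x = ∏ i ∈ s.erase j, ((x - v i) / (v j - v i)) := by
  rw [Lagrange.basis, Polynomial.eval_prod]
  apply Finset.prod_congr rfl
  intro i _
  simp [Lagrange.basisDivisor, div_eq_inv_mul]

-- interpolation formula
lemma eval_interp (n : ℕ) (P : ℝ[X]) (hdeg : P.natDegree ≤ n) (v : ℕ → ℝ)
    (hinj : Set.InjOn v (Finset.range (n+1))) (x : ℝ) :
    P.eval x = ∑ j ∈ Finset.range (n+1),
      P.eval (v j) * ∏ i ∈ (Finset.range (n+1)).erase j, ((x - v i) / (v j - v i)) := by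
  have hlt : P.degree < (#(Finset.range (n+1)) : ℕ) := by
    rw [Finset.card_range]
    calc P.degree ≤ (P.natDegree : WithBot ℕ) := Polynomial.degree_le_natDegree
    _ < ((n+1 : ℕ) : WithBot ℕ) := by exact_mod_cast Nat.lt_succ_of_le hdeg
  have h := Lagrange.eq_interpolate hinj hlt
  conv_lhs => rw [h]
  rw [Lagrange.interpolate_apply, Polynomial.eval_finset_sum]
  apply Finset.sum_congr rfl
  intro j _
  rw [Polynomial.eval_mul, Polynomial.eval_C, eval_lagrange_basis]

lemma exists_nodes (n : ℕ) (a₀ b₀ : ℝ) (hab : a₀ < b₀) (E : Set ℝ) (hEc : IsClosed E)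
    (hE : E ⊆ Icc a₀ b₀) (hμpos : 0 < (volume E).toReal)
    (y : ℕ → ℝ) (hy0 : y 0 = b₀ - (volume E).toReal)
    (hymono : ∀ i j, i < j → j ≤ n → y i < y j)
    (hyub : ∀ j, j ≤ n → y j ≤ b₀) :
    ∃ t : ℕ → ℝ, (∀ j, j ≤ n → t j ∈ E) ∧ (∀ j, j ≤ n → a₀ ≤ t j) ∧
      (∀ j, j ≤ n → t j ≤ y j) ∧
      (∀ i j, i < j → j ≤ n → y j - y i ≤ t j - t i) := by
  set μ : ℝ := (volume E).toReal with hμdef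
  -- the cumulative measure function
  set G : ℝ → ℝ := fun t => (volume (E ∩ Icc a₀ t)).toReal with hGdef
  have hfin : ∀ t, volume (E ∩ Icc a₀ t) ≠ ⊤ := by
    intro t
    refine ne_top_of_le_ne_top ?_ (measure_mono (inter_subset_right))
    rw [Real.volume_Icc]; exact ENNReal.ofReal_ne_top
  have hGmono : Monotone G := by
    intro s t hst
    exact ENNReal.toReal_mono (hfin t)
      (measure_mono (inter_subset_inter_right _ (Icc_subset_Icc_right hst)))
  have hGlip : ∀ s t : ℝ, s ≤ t → G t ≤ G s + (t - s) := by
    intro s t hst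
    have hsub : E ∩ Icc a₀ t ⊆ (E ∩ Icc a₀ s) ∪ Ioc s t := by
      rintro x ⟨hxE, hx1, hx2⟩
      by_cases hxs : x ≤ s
      · exact Or.inl ⟨hxE, hx1, hxs⟩
      · exact Or.inr ⟨lt_of_not_ge hxs, hx2⟩
    have h1 : volume (E ∩ Icc a₀ t) ≤ volume (E ∩ Icc a₀ s) + volume (Ioc s t) :=
      le_trans (measure_mono hsub) (measure_union_le _ _)
    have h2 : volume (Ioc s t) = ENNReal.ofReal (t - s) := Real.volume_Ioc
    have h3 : (volume (E ∩ Icc a₀ s) + volume (Ioc s t)).toReal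
        = G s + (t - s) := by
      rw [ENNReal.toReal_add (hfin s) (by rw [h2]; exact ENNReal.ofReal_ne_top), h2,
        ENNReal.toReal_ofReal (by linarith)]
    have h4 : volume (E ∩ Icc a₀ s) + volume (Ioc s t) ≠ ⊤ := by
      rw [h2]
      exact ENNReal.add_ne_top.mpr ⟨hfin s, ENNReal.ofReal_ne_top⟩
    exact le_trans (ENNReal.toReal_mono h4 h1) (le_of_eq h3)
  have hGcont : Continuous G := by
    have : LipschitzWith 1 G := by
      apply LipschitzWith.of_dist_le_mul
      intro s t
      rw [Real.dist_eq, Real.dist_eq, NNReal.coe_one, one_mul]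
      rcases le_total s t with h | h
      · have h1 := hGmono h
        have h2 := hGlip s t h
        rw [abs_sub_comm, abs_of_nonneg (by linarith), abs_sub_comm s t,
          abs_of_nonneg (by linarith)]
        linarith
      · have h1 := hGmono h
        have h2 := hGlip t s h
        rw [abs_of_nonneg (by linarith), abs_of_nonneg (by linarith)]
        linarith
    exact this.continuous
  have hGa : G a₀ = 0 := by
    have h0 : volume (E ∩ Icc a₀ a₀) = 0 := by
      rw [Set.Icc_self]
      exact measure_mono_null inter_subset_right Real.volume_singleton
    show (volume (E ∩ Icc a₀ a₀)).toReal = 0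
    rw [h0, ENNReal.toReal_zero]
  have hGb : G b₀ = μ := by
    have : E ∩ Icc a₀ b₀ = E := inter_eq_left.mpr hE
    simp [hGdef, this, hμdef]
  have hEne : E.Nonempty := by
    by_contra h
    rw [Set.not_nonempty_iff_eq_empty] at h
    have h0 : μ = 0 := by rw [hμdef, h]; simp
    linarith
  have hEbdd : BddBelow E := ⟨a₀, fun x hx => (hE hx).1⟩
  have hμle : μ ≤ b₀ - a₀ := by
    have h1 : volume E ≤ ENNReal.ofReal (b₀ - a₀) := by
      rw [← Real.volume_Icc]; exact measure_mono hE
    have := ENNReal.toReal_mono ENNReal.ofReal_ne_top h1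
    rwa [ENNReal.toReal_ofReal (by linarith)] at this
  -- the nodes
  set m : ℕ → ℝ := fun j => y j - y 0 with hmdef
  set A : ℕ → Set ℝ := fun j => Icc a₀ b₀ ∩ {u | m j ≤ G u} with hAdef
  have hAclosed : ∀ j, IsClosed (A j) :=
    fun j => isClosed_Icc.inter (isClosed_le continuous_const hGcont)
  have hmle : ∀ j, j ≤ n → m j ≤ μ := by
    intro j hj
    have := hyub j hj
    simp only [hmdef, hy0]; linarith
  have hAne : ∀ j, j ≤ n → (A j).Nonempty := by
    intro j hj
    exact ⟨b₀, ⟨le_of_lt hab, le_refl _⟩, by rw [mem_setOf_eq, hGb]; exact hmle j hj⟩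
  have hAbdd : ∀ j, BddBelow (A j) := fun j => ⟨a₀, fun x hx => hx.1.1⟩
  classical
  set t : ℕ → ℝ := fun j => if j = 0 then sInf E else sInf (A j) with htdef
  have ht0 : t 0 = sInf E := by simp [htdef]
  have ht0E : t 0 ∈ E := by rw [ht0]; exact hEc.csInf_mem hEne hEbdd
  have ht0G : G (t 0) = 0 := by
    have hsub : E ∩ Icc a₀ (t 0) ⊆ {t 0} := by
      rintro x ⟨hxE, _, hx2⟩
      have : t 0 ≤ x := by rw [ht0]; exact csInf_le hEbdd hxE
      exact le_antisymm hx2 this |>.symm ▸ rfl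
    have : volume (E ∩ Icc a₀ (t 0)) = 0 :=
      measure_mono_null hsub Real.volume_singleton
    simp [hGdef, this]
  -- key properties for j ≥ 1
  have hkey : ∀ j, 1 ≤ j → j ≤ n → t j ∈ E ∧ t j ∈ Icc a₀ b₀ ∧ G (t j) = m j := by
    intro j hj1 hjn
    have hmpos : 0 < m j := by
      have := hymono 0 j hj1 hjn; simp only [hmdef]; linarith
    have hj0 : j ≠ 0 := by omega
    have htj : t j = sInf (A j) := by simp [htdef, hj0]
    have htjA : t j ∈ A j := by
      rw [htj]; exact (hAclosed j).csInf_mem (hAne j hjn) (hAbdd j)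
    have htjIcc : t j ∈ Icc a₀ b₀ := htjA.1
    have hGge : m j ≤ G (t j) := htjA.2
    have hlb : ∀ u ∈ A j, t j ≤ u := by
      intro u hu; rw [htj]; exact csInf_le (hAbdd j) hu
    -- G (t j) ≤ m j
    have hGle : G (t j) ≤ m j := by
      by_contra h
      push_neg at h
      have hεpos : 0 < G (t j) - m j := by linarith
      rcases le_or_gt (t j - (G (t j) - m j)) a₀ with hcase | hcase
      · have h1 := hGlip a₀ (t j) htjIcc.1
        rw [hGa] at h1
        linarith
      · have h1 := hGlip (t j - (G (t j) - m j)) (t j) (by linarith)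
        have hGu : m j ≤ G (t j - (G (t j) - m j)) := by linarith
        have huA : t j - (G (t j) - m j) ∈ A j :=
          ⟨⟨le_of_lt hcase, by linarith [htjIcc.2]⟩, hGu⟩
        have := hlb _ huA
        linarith
    have hGeq : G (t j) = m j := le_antisymm hGle hGge
    -- t j ∈ E
    have htjE : t j ∈ E := by
      by_contra htjE
      have hnb : Eᶜ ∈ nhds (t j) := hEc.isOpen_compl.mem_nhds htjE
      rcases Metric.mem_nhds_iff.mp hnb with ⟨ε, hεpos, hball⟩
      have hcut : ∀ u : ℝ, a₀ ≤ u → u ≤ t j → t j - u < ε → G (t j) ≤ G u := by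
        intro u hu1 hu2 hu3
        apply ENNReal.toReal_mono (hfin u)
        apply measure_mono
        rintro x ⟨hxE, hx1, hx2⟩
        refine ⟨hxE, hx1, ?_⟩
        by_contra hxu
        push_neg at hxu
        have hb : x ∈ Metric.ball (t j) ε := by
          rw [Metric.mem_ball, Real.dist_eq, abs_sub_comm, abs_of_nonneg (by linarith)]
          linarith
        exact (hball hb) hxE
      rcases le_or_gt (t j - ε/2) a₀ with hcase | hcase
      · have h1 := hcut a₀ le_rfl htjIcc.1 (by linarith)
        rw [hGa] at h1
        have : 0 < G (t j) := by rw [hGeq]; exact hmpos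
        linarith
      · have h1 := hcut (t j - ε/2) (le_of_lt hcase) (by linarith) (by linarith)
        have hGu' : m j ≤ G (t j - ε/2) := by rw [← hGeq]; exact h1
        have huA : t j - ε/2 ∈ A j :=
          ⟨⟨le_of_lt hcase, by linarith [htjIcc.2]⟩, hGu'⟩
        have := hlb _ huA
        linarith
    exact ⟨htjE, htjIcc, hGeq⟩
  -- consolidate
  have hall : ∀ j, j ≤ n → t j ∈ E ∧ t j ∈ Icc a₀ b₀ ∧ G (t j) = m j := by
    intro j hj
    rcases Nat.eq_zero_or_pos j with rfl | hj1
    · refine ⟨ht0E, hE ht0E, ?_⟩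
      rw [ht0G]; simp [hmdef]
    · exact hkey j hj1 hj
  refine ⟨t, fun j hj => (hall j hj).1, fun j hj => ((hall j hj).2.1).1, ?_, ?_⟩
  · -- t j ≤ y j
    intro j hj
    rcases Nat.eq_zero_or_pos j with rfl | hj1
    · -- sInf E ≤ b₀ - μ = y 0
      have hsub : E ⊆ Icc (t 0) b₀ := fun x hx =>
        ⟨by rw [ht0]; exact csInf_le hEbdd hx, (hE hx).2⟩
      have h1 : volume E ≤ ENNReal.ofReal (b₀ - t 0) := by
        rw [← Real.volume_Icc]; exact measure_mono hsub
      have h2 := ENNReal.toReal_mono ENNReal.ofReal_ne_top h1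
      have h3 : t 0 ≤ b₀ := (hE ht0E).2
      rw [ENNReal.toReal_ofReal (by linarith)] at h2
      rw [hy0]; linarith [h2]
    · have hj0 : j ≠ 0 := by omega
      have htj : t j = sInf (A j) := by simp [htdef, hj0]
      have hyA : y j ∈ A j := by
        constructor
        · constructor
          · -- a₀ ≤ y j
            have := hymono 0 j hj1 hj
            rw [hy0] at this
            linarith
          · exact hyub j hj
        · -- m j ≤ G (y j)
          have h1 := hGlip (y j) b₀ (hyub j hj)
          rw [hGb] at h1
          simp only [mem_setOf_eq, hmdef, hy0]
          linarith
      rw [htj]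
      exact csInf_le (hAbdd j) hyA
  · -- gaps
    intro i j hij hjn
    have hi := hall i (le_of_lt (lt_of_lt_of_le hij hjn))
    have hj := hall j hjn
    have hmij : m i < m j := by
      have := hymono i j hij hjn; simp only [hmdef]; linarith
    have htij : t i < t j := by
      by_contra h
      push_neg at h
      have := hGmono h
      rw [hi.2.2, hj.2.2] at this
      linarith
    have := hGlip (t i) (t j) (le_of_lt htij)
    rw [hi.2.2, hj.2.2] at this
    simp only [hmdef] at this
    linarith

lemma endpoint_bound (n : ℕ) (a₀ b₀ : ℝ) (hab : a₀ < b₀) (E : Set ℝ)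
    (hEc : IsClosed E) (hE : E ⊆ Icc a₀ b₀) (hμpos : 0 < (volume E).toReal)
    (P : ℝ[X]) (hdeg : P.natDegree ≤ n) (hb : ∀ x ∈ E, |P.eval x| ≤ 1) :
    |P.eval a₀| ≤ Cheb n ((2*(b₀-a₀) - (volume E).toReal)/(volume E).toReal) := by
  set μ := (volume E).toReal with hμdef
  have hμle : μ ≤ b₀ - a₀ := by
    have h1 : volume E ≤ ENNReal.ofReal (b₀ - a₀) := by
      rw [← Real.volume_Icc]; exact measure_mono hE
    have := ENNReal.toReal_mono ENNReal.ofReal_ne_top h1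
    rwa [ENNReal.toReal_ofReal (by linarith)] at this
  set σ := (2*(b₀-a₀) - μ)/μ with hσdef
  have hσ1 : 1 ≤ σ := by
    rw [hσdef, le_div_iff₀ hμpos]; linarith
  have hEne : E.Nonempty := by
    by_contra h
    rw [Set.not_nonempty_iff_eq_empty] at h
    have h0 : μ = 0 := by rw [hμdef, h]; simp
    linarith
  rcases Nat.eq_zero_or_pos n with rfl | hn
  · -- degree 0
    obtain ⟨e, he⟩ := hEne
    have hP : P = Polynomial.C (P.coeff 0) := Polynomial.eq_C_of_natDegree_le_zero hdeg
    have h2 := hb e he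
    rw [hP] at h2 ⊢
    simp only [Polynomial.eval_C] at h2 ⊢
    calc |P.coeff 0| ≤ 1 := h2
      _ = Cheb 0 σ := by simp [Cheb]
  -- main case: n ≥ 1
  have hnR : (0:ℝ) < n := by exact_mod_cast hn
  set θ : ℕ → ℝ := fun j => ((n:ℝ) - j) * π / n with hθdef
  set y : ℕ → ℝ := fun j => (b₀ - μ/2) + (μ/2) * Real.cos (θ j) with hydef
  have hθmem : ∀ j, j ≤ n → θ j ∈ Icc 0 π := by
    intro j hj
    have hj' : (j:ℝ) ≤ n := by exact_mod_cast hj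
    constructor
    · apply div_nonneg (mul_nonneg (by linarith) Real.pi_pos.le) hnR.le
    · rw [div_le_iff₀ hnR]
      nlinarith [Real.pi_pos]
  have hθanti : ∀ i j, i < j → θ j < θ i := by
    intro i j hij
    have hij' : (i:ℝ) < j := by exact_mod_cast hij
    show ((n:ℝ) - j) * π / n < ((n:ℝ) - i) * π / n
    have h5 : ((n:ℝ) - j) * π < ((n:ℝ) - i) * π := by nlinarith [Real.pi_pos]
    exact (div_lt_div_iff_of_pos_right hnR).mpr h5

  have hymono : ∀ i j, i < j → j ≤ n → y i < y j := by
    intro i j hij hjn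
    have hcos : Real.cos (θ i) < Real.cos (θ j) :=
      Real.strictAntiOn_cos (hθmem j hjn) (hθmem i (by omega)) (hθanti i j hij)
    have h2 := mul_lt_mul_of_pos_left hcos (by linarith : (0:ℝ) < μ/2)
    show b₀ - μ/2 + μ/2 * Real.cos (θ i) < b₀ - μ/2 + μ/2 * Real.cos (θ j)
    linarith
  have hy0 : y 0 = b₀ - μ := by
    have hθ0 : θ 0 = π := by
      show ((n:ℝ) - (0:ℕ)) * π / n = π
      push_cast
      field_simp
      simp
    show b₀ - μ/2 + μ/2 * Real.cos (θ 0) = b₀ - μ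
    rw [hθ0, Real.cos_pi]
    ring
  have hyub : ∀ j, j ≤ n → y j ≤ b₀ := by
    intro j hj
    have := Real.cos_le_one (θ j)
    show b₀ - μ/2 + μ/2 * Real.cos (θ j) ≤ b₀
    nlinarith
  have hyge : ∀ j, j ≤ n → b₀ - μ ≤ y j := by
    intro j hj
    have := Real.neg_one_le_cos (θ j)
    show b₀ - μ ≤ b₀ - μ/2 + μ/2 * Real.cos (θ j)
    nlinarith
  have hya : ∀ j, j ≤ n → a₀ ≤ y j := by
    intro j hj
    have := hyge j hj
    linarith
  obtain ⟨t, htE, hta, hty, htgap⟩ :=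
    exists_nodes n a₀ b₀ hab E hEc hE hμpos y hy0 hymono hyub
  have htmono : ∀ i j, i < j → j ≤ n → t i < t j := by
    intro i j hij hjn
    have h1 := htgap i j hij hjn
    have h2 := hymono i j hij hjn
    linarith
  have htinj : Set.InjOn t (Finset.range (n+1) : Finset ℕ) := by
    intro i hi j hj hij
    simp only [Finset.coe_range, Set.mem_Iio] at hi hj
    by_contra hne
    rcases lt_trichotomy i j with h | h | h
    · exact absurd hij (ne_of_lt (htmono i j h (by omega)))
    · exact hne h
    · exact absurd hij.symm (ne_of_lt (htmono j i h (by omega)))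
  have hyinj : Set.InjOn y (Finset.range (n+1) : Finset ℕ) := by
    intro i hi j hj hij
    simp only [Finset.coe_range, Set.mem_Iio] at hi hj
    by_contra hne
    rcases lt_trichotomy i j with h | h | h
    · exact absurd hij (ne_of_lt (hymono i j h (by omega)))
    · exact hne h
    · exact absurd hij.symm (ne_of_lt (hymono j i h (by omega)))
  -- the comparison polynomial
  set Q : ℝ[X] := (Polynomial.Chebyshev.T ℝ (n:ℤ)).comp
      (Polynomial.C ((b₀ - μ/2) * (2/μ)) - Polynomial.C (2/μ) * Polynomial.X) with hQdef
  have hQeval : ∀ x : ℝ, Q.eval x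
      = (Polynomial.Chebyshev.T ℝ (n:ℤ)).eval ((b₀ - μ/2 - x) * (2/μ)) := by
    intro x
    have harg : (Polynomial.C ((b₀ - μ/2) * (2/μ)) - Polynomial.C (2/μ) * Polynomial.X).eval x
        = (b₀ - μ/2 - x) * (2/μ) := by
      simp
      ring
    rw [hQdef, Polynomial.eval_comp, harg]
  have hQdeg : Q.natDegree ≤ n := by
    rw [hQdef]
    apply le_trans (Polynomial.natDegree_comp_le)
    have h1 : (Polynomial.C ((b₀ - μ/2) * (2/μ)) - Polynomial.C (2/μ) * Polynomial.X
        : ℝ[X]).natDegree ≤ 1 := by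
      apply le_trans (Polynomial.natDegree_sub_le _ _)
      apply max_le
      · rw [Polynomial.natDegree_C]; omega
      · apply le_trans (Polynomial.natDegree_mul_le)
        rw [Polynomial.natDegree_C, Polynomial.natDegree_X]
    calc (Polynomial.Chebyshev.T ℝ (n:ℤ)).natDegree *
          (Polynomial.C ((b₀ - μ/2) * (2/μ)) - Polynomial.C (2/μ) * Polynomial.X
            : ℝ[X]).natDegree
        ≤ n * 1 := Nat.mul_le_mul (natDegree_T_le n) h1
      _ = n := by ring
  have hQnodes : ∀ j, j ≤ n → Q.eval (y j) = (-1:ℝ)^j := by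
    intro j hj
    rw [hQeval]
    have h1 : b₀ - μ/2 - y j = -(μ/2) * Real.cos (θ j) := by
      show b₀ - μ/2 - (b₀ - μ/2 + μ/2 * Real.cos (θ j)) = -(μ/2) * Real.cos (θ j)
      ring
    have h2 : (b₀ - μ/2 - y j) * (2/μ) = -Real.cos (θ j) := by
      rw [h1]
      field_simp
    have h3 : -Real.cos (θ j) = Real.cos ((j:ℝ) * π / n) := by
      rw [← Real.cos_pi_sub]
      congr 1
      show π - ((n:ℝ) - j) * π / n = (j:ℝ) * π / n
      field_simp
      ring
    rw [h2, h3, Polynomial.Chebyshev.T_real_cos]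
    have h4 : ((n:ℤ):ℝ) * ((j:ℝ) * π / n) = (j:ℝ) * π := by
      push_cast
      field_simp
    rw [h4]
    simpa using Real.cos_nat_mul_pi_sub 0 j
  have hQa : Q.eval a₀ = Cheb n σ := by
    rw [hQeval]
    have h1 : (b₀ - μ/2 - a₀) * (2/μ) = σ := by
      rw [hσdef]
      field_simp
      ring
    rw [h1, chebT_eval_eq_cheb hσ1]
  -- interpolation
  have hPsum := eval_interp n P hdeg t htinj a₀
  have hQsum := eval_interp n Q hQdeg y hyinj a₀
  -- the majorant terms
  set D : ℕ → ℝ := fun j =>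
    ∏ i ∈ (Finset.range (n+1)).erase j, ((y i - a₀) / |y j - y i|) with hDdef
  have hstep1 : |P.eval a₀| ≤ ∑ j ∈ Finset.range (n+1),
      |∏ i ∈ (Finset.range (n+1)).erase j, ((a₀ - t i) / (t j - t i))| := by
    rw [hPsum]
    apply le_trans (Finset.abs_sum_le_sum_abs _ _)
    apply Finset.sum_le_sum
    intro j hj
    rw [abs_mul]
    apply mul_le_of_le_one_left (abs_nonneg _)
    exact hb _ (htE j (by simp only [Finset.mem_range] at hj; omega))
  have hstep2 : ∀ j, j ≤ n → |∏ i ∈ (Finset.range (n+1)).erase j,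
      ((a₀ - t i) / (t j - t i))| ≤ D j := by
    intro j hjn
    rw [Finset.abs_prod, hDdef]
    apply Finset.prod_le_prod
    · intro i _; exact abs_nonneg _
    · intro i hi
      rw [Finset.mem_erase, Finset.mem_range] at hi
      obtain ⟨hij, hirange⟩ := hi
      have hin : i ≤ n := by omega
      have habs_den : |y j - y i| ≤ |t j - t i| ∧ 0 < |y j - y i| := by
        rcases lt_or_gt_of_ne hij with h | h
        · -- i < j
          have h1 := htgap i j h hjn
          have h2 := hymono i j h hjn
          have h3 := htmono i j h hjn
          constructor
          · rw [abs_of_pos (by linarith), abs_of_pos (by linarith)]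
            linarith
          · rw [abs_of_pos (by linarith)]; linarith
        · -- j < i
          have h1 := htgap j i h hin
          have h2 := hymono j i h hin
          have h3 := htmono j i h hin
          constructor
          · rw [abs_of_neg (by linarith), abs_of_neg (by linarith)]
            linarith
          · rw [abs_of_neg (by linarith)]; linarith
      rw [abs_div, abs_sub_comm a₀ (t i), abs_of_nonneg (by linarith [hta i hin] : (0:ℝ) ≤ t i - a₀)]
      apply div_le_div₀ (by linarith [hya i hin, hty i hin]) ?_ habs_den.2 habs_den.1
      linarith [hty i hin]
  have hstep3 : ∑ j ∈ Finset.range (n+1), D j = Q.eval a₀ := by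
    rw [hQsum]
    apply Finset.sum_congr rfl
    intro j hj
    rw [Finset.mem_range] at hj
    have hjn : j ≤ n := by omega
    rw [hQnodes j hjn]
    have hsign := prod_erase_sign n j hj (fun i => (a₀ - y i) / (y j - y i))
    have hD : D j = ∏ i ∈ (Finset.range (n+1)).erase j,
        (if i < j then -((a₀ - y i) / (y j - y i)) else (a₀ - y i) / (y j - y i)) := by
      rw [hDdef]
      apply Finset.prod_congr rfl
      intro i hi
      rw [Finset.mem_erase, Finset.mem_range] at hi
      obtain ⟨hij, hirange⟩ := hi
      have hin : i ≤ n := by omega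
      split_ifs with hlt
      · have h2 := hymono i j hlt hjn
        rw [abs_of_pos (by linarith), neg_div', neg_sub]
      · have hgt : j < i := by omega
        have h2 := hymono j i hgt hin
        rw [abs_of_neg (by linarith), div_eq_div_iff (by linarith) (by linarith)]
        ring
    rw [hD, ← hsign]
  have hfinal : ∑ j ∈ Finset.range (n+1),
      |∏ i ∈ (Finset.range (n+1)).erase j, ((a₀ - t i) / (t j - t i))|
      ≤ ∑ j ∈ Finset.range (n+1), D j := by
    apply Finset.sum_le_sum
    intro j hj
    rw [Finset.mem_range] at hj
    exact hstep2 j (by omega)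
  calc |P.eval a₀| ≤ _ := hstep1
    _ ≤ ∑ j ∈ Finset.range (n+1), D j := hfinal
    _ = Q.eval a₀ := hstep3
    _ = Cheb n σ := hQa

lemma endpoint_bound' (n : ℕ) (a₀ b₀ : ℝ) (hab : a₀ < b₀) (E : Set ℝ)
    (hEc : IsClosed E) (hE : E ⊆ Icc a₀ b₀) (hμpos : 0 < (volume E).toReal)
    (P : ℝ[X]) (hdeg : P.natDegree ≤ n) (hb : ∀ x ∈ E, |P.eval x| ≤ 1) :
    |P.eval b₀| ≤ Cheb n ((2*(b₀-a₀) - (volume E).toReal)/(volume E).toReal) := by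
  set P' : ℝ[X] := P.comp (-Polynomial.X) with hP'def
  have hP'eval : ∀ u : ℝ, P'.eval u = P.eval (-u) := by
    intro u
    rw [hP'def, Polynomial.eval_comp]
    simp
  have hP'deg : P'.natDegree ≤ n := by
    rw [hP'def]
    apply le_trans (Polynomial.natDegree_comp_le)
    rw [Polynomial.natDegree_neg, Polynomial.natDegree_X, mul_one]
    exact hdeg
  set E' : Set ℝ := Neg.neg ⁻¹' E with hE'def
  have hE'c : IsClosed E' := hEc.preimage continuous_neg
  have hE'sub : E' ⊆ Icc (-b₀) (-a₀) := by
    intro u hu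
    have := hE hu
    rw [Set.mem_Icc] at this ⊢
    constructor <;> linarith [this.1, this.2]
  have hE'vol : volume E' = volume E := Measure.measure_preimage_neg volume E
  have hμ'pos : 0 < (volume E').toReal := by rw [hE'vol]; exact hμpos
  have hb' : ∀ u ∈ E', |P'.eval u| ≤ 1 := by
    intro u hu
    rw [hP'eval]
    exact hb (-u) hu
  have h := endpoint_bound n (-b₀) (-a₀) (by linarith) E' hE'c hE'sub hμ'pos P' hP'deg hb'
  rw [hP'eval, neg_neg, hE'vol] at h
  convert h using 3
  ring

lemma remez_global (n : ℕ) (δ : ℝ) (hδ0 : 0 < δ) (hδ1 : δ < 1)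
    (P : ℝ[X]) (E : Set ℝ) (hEc : IsClosed E) (hE1 : E ⊆ Icc (-1 : ℝ) 1)
    (hmeas : 2 - 2*δ ≤ (volume E).toReal) (hdeg : P.natDegree ≤ n)
    (hb : ∀ z ∈ E, |P.eval z| ≤ 1) :
    ∀ x ∈ Icc (-1:ℝ) 1, |P.eval x| ≤ Cheb n ((1+δ)/(1-δ)) := by
  intro x hx
  obtain ⟨hx1, hx2⟩ := hx
  set a := (volume (E ∩ Icc (-1:ℝ) x)).toReal with hadef
  set b := (volume (E ∩ Icc x 1)).toReal with hbdef
  have hfina : volume (E ∩ Icc (-1:ℝ) x) ≠ ⊤ := by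
    refine ne_top_of_le_ne_top ?_ (measure_mono inter_subset_right)
    rw [Real.volume_Icc]; exact ENNReal.ofReal_ne_top
  have hfinb : volume (E ∩ Icc x 1) ≠ ⊤ := by
    refine ne_top_of_le_ne_top ?_ (measure_mono inter_subset_right)
    rw [Real.volume_Icc]; exact ENNReal.ofReal_ne_top
  have ha0 : 0 ≤ a := ENNReal.toReal_nonneg
  have hb0 : 0 ≤ b := ENNReal.toReal_nonneg
  have ha_le : a ≤ x + 1 := by
    have h1 : volume (E ∩ Icc (-1:ℝ) x) ≤ ENNReal.ofReal (x + 1) := by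
      refine le_trans (measure_mono inter_subset_right) ?_
      rw [Real.volume_Icc]
      apply le_of_eq; congr 1; ring
    have := ENNReal.toReal_mono ENNReal.ofReal_ne_top h1
    rwa [ENNReal.toReal_ofReal (by linarith)] at this
  have hb_le : b ≤ 1 - x := by
    have h1 : volume (E ∩ Icc x 1) ≤ ENNReal.ofReal (1 - x) := by
      refine le_trans (measure_mono inter_subset_right) ?_
      rw [Real.volume_Icc]
    have := ENNReal.toReal_mono ENNReal.ofReal_ne_top h1
    rwa [ENNReal.toReal_ofReal (by linarith)] at this
  have hsum : 2 - 2*δ ≤ a + b := by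
    have hsub : E ⊆ (E ∩ Icc (-1:ℝ) x) ∪ (E ∩ Icc x 1) := by
      intro z hz
      have hz' := hE1 hz
      rw [Set.mem_Icc] at hz'
      by_cases hzx : z ≤ x
      · exact Or.inl ⟨hz, hz'.1, hzx⟩
      · exact Or.inr ⟨hz, le_of_not_ge hzx, hz'.2⟩
    have h1 : volume E ≤ volume (E ∩ Icc (-1:ℝ) x) + volume (E ∩ Icc x 1) :=
      le_trans (measure_mono hsub) (measure_union_le _ _)
    have h2 : (volume (E ∩ Icc (-1:ℝ) x) + volume (E ∩ Icc x 1)).toReal = a + b :=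
      ENNReal.toReal_add hfina hfinb
    have h3 := ENNReal.toReal_mono (by rw [← h2] at *; exact ENNReal.add_ne_top.mpr ⟨hfina, hfinb⟩) h1
    rw [h2] at h3
    linarith
  have hδ1' : (0:ℝ) < 1 - δ := by linarith
  by_cases hcase : x < 1 ∧ (1-x)*(1-δ) ≤ b
  · obtain ⟨hc2, hc1⟩ := hcase
    have hbpos : 0 < b := lt_of_lt_of_le (by nlinarith) hc1
    have h := endpoint_bound n x 1 hc2 (E ∩ Icc x 1) (hEc.inter isClosed_Icc)
      inter_subset_right hbpos P hdeg (fun z hz => hb z hz.1)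
    rw [← hbdef] at h
    refine le_trans h (cheb_mono n ?_ ?_)
    · rw [le_div_iff₀ hbpos]; nlinarith
    · rw [div_le_div_iff₀ hbpos hδ1']; nlinarith
  · have hkey : -1 < x ∧ (1+x)*(1-δ) ≤ a := by
      rcases lt_or_ge x 1 with h1 | h1
      · have hb' : b < (1-x)*(1-δ) := by
          by_contra h
          push_neg at h
          exact hcase ⟨h1, h⟩
        constructor
        · by_contra h
          push_neg at h
          have hx1' : x = -1 := le_antisymm h hx1
          rw [hx1'] at ha_le hb'
          nlinarith
        · nlinarith
      · have hx21 : x = 1 := le_antisymm hx2 h1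
        have hb'' : b = 0 := le_antisymm (by rw [hx21] at hb_le; linarith) hb0
        constructor
        · linarith
        · rw [hx21]; nlinarith
    obtain ⟨hc2, hc1⟩ := hkey
    have hapos : 0 < a := lt_of_lt_of_le (by nlinarith) hc1
    have h := endpoint_bound' n (-1) x hc2 (E ∩ Icc (-1:ℝ) x) (hEc.inter isClosed_Icc)
      inter_subset_right hapos P hdeg (fun z hz => hb z hz.1)
    rw [← hadef] at h
    refine le_trans h (cheb_mono n ?_ ?_)
    · rw [le_div_iff₀ hapos]; nlinarith
    · rw [div_le_div_iff₀ hapos hδ1']; nlinarith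

lemma remez_poly (n : ℕ) (δ : ℝ) (hδ0 : 0 < δ) (hδ1 : δ < 1) :
    ∃ P : Polynomial ℝ, P.natDegree ≤ n ∧
      (∀ x : ℝ, P.eval x = (Polynomial.Chebyshev.T ℝ (n : ℤ)).eval ((δ - x) / (1 - δ))) ∧
      (∀ x ∈ Icc (-1 + 2 * δ) 1, |P.eval x| ≤ 1) ∧
      |P.eval (-1)| = Cheb n ((1 + δ) / (1 - δ)) := by
  have h1δ : (0:ℝ) < 1 - δ := by linarith
  have hσ1 : (1:ℝ) ≤ (1 + δ)/(1 - δ) := by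
    rw [le_div_iff₀ h1δ]; linarith
  set P : ℝ[X] := (Polynomial.Chebyshev.T ℝ (n:ℤ)).comp
      (Polynomial.C (δ/(1-δ)) - Polynomial.C ((1-δ)⁻¹) * Polynomial.X) with hPdef
  have heval : ∀ x : ℝ, P.eval x
      = (Polynomial.Chebyshev.T ℝ (n:ℤ)).eval ((δ - x) / (1 - δ)) := by
    intro x
    have harg : (Polynomial.C (δ/(1-δ)) - Polynomial.C ((1-δ)⁻¹) * Polynomial.X).eval x
        = (δ - x) / (1 - δ) := by
      simp
      field_simp
    rw [hPdef, Polynomial.eval_comp, harg]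
  have hdeg : P.natDegree ≤ n := by
    rw [hPdef]
    apply le_trans (Polynomial.natDegree_comp_le)
    have h1 : (Polynomial.C (δ/(1-δ)) - Polynomial.C ((1-δ)⁻¹) * Polynomial.X
        : ℝ[X]).natDegree ≤ 1 := by
      apply le_trans (Polynomial.natDegree_sub_le _ _)
      apply max_le
      · rw [Polynomial.natDegree_C]; omega
      · apply le_trans (Polynomial.natDegree_mul_le)
        rw [Polynomial.natDegree_C, Polynomial.natDegree_X]
    calc (Polynomial.Chebyshev.T ℝ (n:ℤ)).natDegree *
        (Polynomial.C (δ/(1-δ)) - Polynomial.C ((1-δ)⁻¹) * Polynomial.X : ℝ[X]).natDegree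
        ≤ n * 1 := Nat.mul_le_mul (natDegree_T_le n) h1
      _ = n := by ring
  refine ⟨P, hdeg, heval, ?_, ?_⟩
  · intro x hx
    rw [Set.mem_Icc] at hx
    have hu1 : -1 ≤ (δ - x) / (1 - δ) := by
      rw [le_div_iff₀ h1δ]; linarith
    have hu2 : (δ - x) / (1 - δ) ≤ 1 := by
      rw [div_le_iff₀ h1δ]; linarith
    rw [heval, ← Real.cos_arccos hu1 hu2, Polynomial.Chebyshev.T_real_cos]
    exact Real.abs_cos_le_one _
  · rw [heval]
    have harg : (δ - (-1)) / (1 - δ) = (1 + δ)/(1 - δ) := by ring_nf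
    rw [harg, chebT_eval_eq_cheb hσ1]
    exact abs_of_nonneg (by linarith [cheb_one_le hσ1 n])

/-- the Remez constant `sup_{x₀} L_{n,δ}(x₀) = 𝔗ₙ((1+δ)/(1−δ))`,
attained at `x₀ = −1` by the Remez polynomial for `E = [−1+2δ,1]`. -/
theorem remez_constant (n : ℕ) (δ : ℝ) (hδ : δ ∈ Ioo (0 : ℝ) 1) :
    sSup {y | ∃ x₀ ∈ Icc (-1 : ℝ) 1, y = Ln n δ x₀} = Cheb n ((1 + δ) / (1 - δ)) ∧
    (∀ (P : Polynomial ℝ) (E : Set ℝ), IsClosed E → E ⊆ Icc (-1 : ℝ) 1 →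
      2 - 2 * δ ≤ (volume E).toReal → P.natDegree ≤ n → (∀ x ∈ E, |P.eval x| ≤ 1) →
      ∀ x ∈ Icc (-1 : ℝ) 1, |P.eval x| ≤ Cheb n ((1 + δ) / (1 - δ))) ∧
    (∃ P : Polynomial ℝ, P.natDegree ≤ n ∧
      (∀ x : ℝ, P.eval x = (Polynomial.Chebyshev.T ℝ (n : ℤ)).eval ((δ - x) / (1 - δ))) ∧
      (∀ x ∈ Icc (-1 + 2 * δ) 1, |P.eval x| ≤ 1) ∧
      |P.eval (-1)| = Cheb n ((1 + δ) / (1 - δ))) := by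
  obtain ⟨hδ0, hδ1⟩ := hδ
  have h1δ : (0:ℝ) < 1 - δ := by linarith
  have hσ1 : (1:ℝ) ≤ (1 + δ)/(1 - δ) := by rw [le_div_iff₀ h1δ]; linarith
  have hK1 : 1 ≤ Cheb n ((1 + δ)/(1 - δ)) := cheb_one_le hσ1 n
  have hK0 : 0 ≤ Cheb n ((1 + δ)/(1 - δ)) := by linarith
  have part2 : ∀ (P : Polynomial ℝ) (E : Set ℝ), IsClosed E → E ⊆ Icc (-1 : ℝ) 1 →
      2 - 2 * δ ≤ (volume E).toReal → P.natDegree ≤ n → (∀ x ∈ E, |P.eval x| ≤ 1) →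
      ∀ x ∈ Icc (-1 : ℝ) 1, |P.eval x| ≤ Cheb n ((1 + δ) / (1 - δ)) := by
    intro P E hEc hE1 hmeas hdeg hbd x hx
    exact remez_global n δ hδ0 hδ1 P E hEc hE1 hmeas hdeg hbd x hx
  obtain ⟨P₃, hP3deg, hP3eval, hP3bd, hP3val⟩ := remez_poly n δ hδ0 hδ1
  refine ⟨?_, part2, ⟨P₃, hP3deg, hP3eval, hP3bd, hP3val⟩⟩
  -- upper bounds on Mn
  have hMnub : ∀ x₀, x₀ ∈ Icc (-1:ℝ) 1 → ∀ E : Set ℝ, IsClosed E → E ⊆ Icc (-1:ℝ) 1 →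
      2 - 2*δ ≤ (volume E).toReal →
      ∀ z ∈ {y | ∃ P : Polynomial ℝ, P.natDegree ≤ n ∧ (∀ x ∈ E, |P.eval x| ≤ 1) ∧
        y = |P.eval x₀|}, z ≤ Cheb n ((1 + δ)/(1 - δ)) := by
    rintro x₀ hx₀ E hEc hE1 hmeas z ⟨P, hdeg, hbd, rfl⟩
    exact part2 P E hEc hE1 hmeas hdeg hbd x₀ hx₀
  have hMn_le : ∀ x₀, x₀ ∈ Icc (-1:ℝ) 1 → ∀ E : Set ℝ, IsClosed E → E ⊆ Icc (-1:ℝ) 1 →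
      2 - 2*δ ≤ (volume E).toReal → Mn n x₀ E ≤ Cheb n ((1 + δ)/(1 - δ)) := by
    intro x₀ hx₀ E hEc hE1 hmeas
    exact Real.sSup_le (hMnub x₀ hx₀ E hEc hE1 hmeas) hK0
  have hLn_le : ∀ x₀, x₀ ∈ Icc (-1:ℝ) 1 → Ln n δ x₀ ≤ Cheb n ((1 + δ)/(1 - δ)) := by
    intro x₀ hx₀
    apply Real.sSup_le _ hK0
    rintro z ⟨E, hEc, hE1, hmeas, rfl⟩
    exact hMn_le x₀ hx₀ E hEc hE1 hmeas
  have hm1 : (-1:ℝ) ∈ Icc (-1:ℝ) 1 := ⟨le_rfl, by linarith⟩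
  -- the extremal set
  have hE₀c : IsClosed (Icc (-1 + 2*δ) (1:ℝ)) := isClosed_Icc
  have hE₀sub : Icc (-1 + 2*δ) (1:ℝ) ⊆ Icc (-1:ℝ) 1 := Icc_subset_Icc (by linarith) le_rfl
  have hE₀meas : 2 - 2*δ ≤ (volume (Icc (-1 + 2*δ) (1:ℝ))).toReal := by
    rw [Real.volume_Icc, ENNReal.toReal_ofReal (by linarith)]; linarith
  have hMnE₀_bdd : BddAbove {y | ∃ P : Polynomial ℝ, P.natDegree ≤ n ∧
      (∀ x ∈ Icc (-1 + 2*δ) (1:ℝ), |P.eval x| ≤ 1) ∧ y = |P.eval (-1:ℝ)|} :=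
    ⟨Cheb n ((1 + δ)/(1 - δ)), fun z hz => hMnub (-1) hm1 _ hE₀c hE₀sub hE₀meas z hz⟩
  have hMnE₀_ge : Cheb n ((1 + δ)/(1 - δ)) ≤ Mn n (-1) (Icc (-1 + 2*δ) (1:ℝ)) := by
    apply le_csSup hMnE₀_bdd
    exact ⟨P₃, hP3deg, hP3bd, hP3val.symm⟩
  have hLn_bdd : BddAbove {y | ∃ E : Set ℝ, IsClosed E ∧ E ⊆ Icc (-1 : ℝ) 1 ∧
      2 - 2 * δ ≤ (volume E).toReal ∧ y = Mn n (-1:ℝ) E} := by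
    refine ⟨Cheb n ((1 + δ)/(1 - δ)), ?_⟩
    rintro z ⟨E, hEc, hE1, hmeas, rfl⟩
    exact hMn_le (-1) hm1 E hEc hE1 hmeas
  have hLn_ge : Cheb n ((1 + δ)/(1 - δ)) ≤ Ln n δ (-1) := by
    refine le_trans hMnE₀_ge (le_csSup hLn_bdd ?_)
    exact ⟨Icc (-1 + 2*δ) (1:ℝ), hE₀c, hE₀sub, hE₀meas, rfl⟩
  have hLn_eq : Ln n δ (-1) = Cheb n ((1 + δ)/(1 - δ)) :=
    le_antisymm (hLn_le (-1) hm1) hLn_ge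
  apply le_antisymm
  · apply Real.sSup_le _ hK0
    rintro z ⟨x₀, hx₀, rfl⟩
    exact hLn_le x₀ hx₀
  · rw [← hLn_eq]
    apply le_csSup
    · refine ⟨Cheb n ((1 + δ)/(1 - δ)), ?_⟩
      rintro z ⟨x₀, hx₀, rfl⟩
      exact hLn_le x₀ hx₀
    · exact ⟨-1, hm1, rfl⟩
end

section
/- For every δ ∈ (0,1), the function α ↦ c(α) is differentiable on (δ−1, 1−δ) and its derivative satisfies c'(α) > 1 for every α ∈ (δ−1, 0). -/
open MeasureTheory Set Filter Real

namespace CptAux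

open intervalIntegral

/-- The normalized integrand after the substitution `ξ = α + δ t`. -/
noncomputable def Gg (δ α t : ℝ) : ℝ := (Real.sqrt ((1 - (α + δ * t) ^ 2) * (1 - t ^ 2)))⁻¹

/-- The logarithmic derivative factor. -/
noncomputable def ps (δ α t : ℝ) : ℝ := (α + δ * t) / (1 - (α + δ * t) ^ 2)

lemma measurable_Gg (δ α : ℝ) : Measurable (Gg δ α) := by
  unfold Gg; fun_prop

lemma measurable_ps (δ α : ℝ) : Measurable (ps δ α) := by
  unfold ps; fun_prop

/-- integrability of the weight `1/√(1-t²)` on `[0,1]`. -/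
lemma w_int01 : IntervalIntegrable (fun t : ℝ => (Real.sqrt (1 - t ^ 2))⁻¹) volume 0 1 := by
  have hi : IntervalIntegrable (fun t : ℝ => (1 - t) ^ (-(1/2) : ℝ)) volume 0 1 := by
    simpa using (intervalIntegrable_rpow' (a := 1) (b := 0)
      (r := (-(1/2) : ℝ)) (by norm_num)).comp_sub_left 1
  refine hi.mono_fun (by fun_prop : Measurable fun t : ℝ => (Real.sqrt (1 - t ^ 2))⁻¹).aestronglyMeasurable ?_
  · filter_upwards [ae_restrict_mem measurableSet_uIoc] with t ht
    rw [uIoc_of_le (by norm_num : (0:ℝ) ≤ 1)] at ht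
    have h0t : 0 < t := ht.1
    have ht1 : t ≤ 1 := ht.2
    have h1 : (0:ℝ) ≤ 1 - t := by linarith
    have h2 : Real.sqrt (1 - t) * Real.sqrt (1 + t) = Real.sqrt (1 - t ^ 2) := by
      rw [← Real.sqrt_mul h1]; ring_nf
    have h3 : (1 - t) ^ (-(1/2) : ℝ) = (Real.sqrt (1 - t))⁻¹ := by
      rw [Real.rpow_neg h1, Real.sqrt_eq_rpow]
    simp only [Gg, norm_eq_abs, Function.comp, id]
    rw [abs_of_nonneg (by positivity), abs_of_nonneg (by positivity), h3]
    rw [← h2]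
    rcases eq_or_lt_of_le h1 with h | h
    · simp [← h]
    · have h4 : (1:ℝ) ≤ Real.sqrt (1 + t) := by
        have := Real.sqrt_le_sqrt (show (1:ℝ) ≤ 1 + t by linarith)
        rwa [Real.sqrt_one] at this
      rw [mul_inv]
      calc (Real.sqrt (1 - t))⁻¹ * (Real.sqrt (1 + t))⁻¹
          ≤ (Real.sqrt (1 - t))⁻¹ * 1 := by
            apply mul_le_mul_of_nonneg_left _ (by positivity)
            exact inv_le_one_of_one_le₀ h4
        _ = (Real.sqrt (1 - t))⁻¹ := by ring

/-- integrability of the weight `1/√(1-t²)` on `[-1,1]`. -/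
lemma w_int : IntervalIntegrable (fun t : ℝ => (Real.sqrt (1 - t ^ 2))⁻¹) volume (-1) 1 := by
  have h2 : IntervalIntegrable (fun t : ℝ => (Real.sqrt (1 - t ^ 2))⁻¹) volume (-1) 0 := by
    have := ((IntervalIntegrable.iff_comp_neg (f := fun t : ℝ => (Real.sqrt (1 - t ^ 2))⁻¹) (a := 0) (b := 1)).mp w_int01)
    simp only [neg_neg, neg_zero] at this
    simpa using this.symm
  exact h2.trans w_int01


/-- Pointwise bound for `Gg`. -/
lemma Gg_le {δ α t m : ℝ} (hm : |α + δ * t| ≤ m) (hm1 : m < 1) :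
    Gg δ α t ≤ (Real.sqrt (1 - m ^ 2))⁻¹ * (Real.sqrt (1 - t ^ 2))⁻¹ := by
  have hm0 : 0 ≤ m := le_trans (abs_nonneg _) hm
  have hx2 : (α + δ * t) ^ 2 ≤ m ^ 2 := by
    rw [← sq_abs]; exact pow_le_pow_left₀ (abs_nonneg _) hm 2
  have h1 : (0:ℝ) < 1 - m ^ 2 := by nlinarith
  have h2 : (0:ℝ) ≤ 1 - (α + δ * t) ^ 2 := by nlinarith
  unfold Gg
  rw [Real.sqrt_mul h2, mul_inv]
  have hmono : (Real.sqrt (1 - (α + δ * t) ^ 2))⁻¹ ≤ (Real.sqrt (1 - m ^ 2))⁻¹ := by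
    have : Real.sqrt (1 - m ^ 2) ≤ Real.sqrt (1 - (α + δ * t) ^ 2) :=
      Real.sqrt_le_sqrt (by nlinarith)
    exact inv_anti₀ (Real.sqrt_pos.mpr h1) this
  exact mul_le_mul_of_nonneg_right hmono (by positivity)

/-- Pointwise bound for `ps`. -/
lemma ps_le {δ α t m : ℝ} (hm : |α + δ * t| ≤ m) (hm1 : m < 1) :
    |ps δ α t| ≤ m / (1 - m ^ 2) := by
  have hm0 : 0 ≤ m := le_trans (abs_nonneg _) hm
  have hx2 : (α + δ * t) ^ 2 ≤ m ^ 2 := by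
    rw [← sq_abs]; exact pow_le_pow_left₀ (abs_nonneg _) hm 2
  have h1 : (0:ℝ) < 1 - m ^ 2 := by nlinarith
  have h2 : (0:ℝ) < 1 - (α + δ * t) ^ 2 := by nlinarith
  unfold ps
  rw [abs_div, abs_of_pos h2]
  exact div_le_div₀ hm0 hm (by nlinarith) (by nlinarith)

/-- `Gg` is positive in the open square. -/
lemma Gg_pos {δ α t : ℝ} (hx : |α + δ * t| < 1) (ht : t ∈ Ioo (-1:ℝ) 1) :
    0 < Gg δ α t := by
  have h2 : (0:ℝ) < 1 - (α + δ * t) ^ 2 := by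
    have h := abs_lt.mp hx
    nlinarith [h.1, h.2]
  have h3 : (0:ℝ) < 1 - t ^ 2 := by nlinarith [ht.1, ht.2]
  unfold Gg
  positivity

/-- `Gg = 0` when `1 - t² ≤ 0`. -/
lemma abs_x_le {δ α t m : ℝ} (hδ : 0 < δ) (ht : |t| ≤ 1)
    (hα : |α| ≤ m - δ) : |α + δ * t| ≤ m := by
  calc |α + δ * t| ≤ |α| + |δ * t| := abs_add_le _ _
    _ = |α| + δ * |t| := by rw [abs_mul, abs_of_pos hδ]
    _ ≤ (m - δ) + δ * 1 := by gcongr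
    _ = m := by ring

/-- Master integrability criterion from the weight bound. -/
lemma intInt {f : ℝ → ℝ} {C : ℝ}
    (hfm : AEStronglyMeasurable f (volume.restrict (Set.uIoc (-1:ℝ) 1)))
    (hb : ∀ t ∈ Ioc (-1:ℝ) 1, |f t| ≤ C * (Real.sqrt (1 - t ^ 2))⁻¹) :
    IntervalIntegrable f volume (-1) 1 := by
  refine (w_int.const_mul C).mono_fun hfm ?_
  filter_upwards [ae_restrict_mem measurableSet_uIoc] with t ht
  rw [uIoc_of_le (by norm_num : (-1:ℝ) ≤ 1)] at ht
  have := hb t ht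
  simp only [norm_eq_abs]
  exact this.trans (le_abs_self _)

/-- strict monotonicity of `x ↦ x/(1-x²)` transported to `ps`. -/
lemma frac_mono {x y : ℝ} (hx : -1 < x) (hxy : x < y) (hy : y < 1) :
    x / (1 - x ^ 2) < y / (1 - y ^ 2) := by
  have h1 : (0:ℝ) < 1 - x ^ 2 := by nlinarith
  have h2 : (0:ℝ) < 1 - y ^ 2 := by nlinarith
  rw [div_lt_div_iff₀ h1 h2]
  nlinarith [mul_pos (show (0:ℝ) < 1 + x by linarith) (show (0:ℝ) < 1 + y by linarith),
    mul_pos (show (0:ℝ) < 1 - x by nlinarith) (show (0:ℝ) < 1 - y by linarith)]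

lemma ps_mono {δ α t s : ℝ} (hδ : 0 < δ) (hts : t < s)
    (hxt : |α + δ * t| < 1) (hxs : |α + δ * s| < 1) :
    ps δ α t < ps δ α s := by
  have h1 := abs_lt.mp hxt
  have h2 := abs_lt.mp hxs
  unfold ps
  exact frac_mono h1.1 (by nlinarith) h2.2

lemma Gg_nonneg (δ α t : ℝ) : 0 ≤ Gg δ α t := by unfold Gg; positivity

lemma abs_alpha_lt {δ α : ℝ} (hδ : δ ∈ Ioo (0:ℝ) 1) (hα : α ∈ Ioo (δ - 1) (1 - δ)) :
    |α| < 1 - δ := abs_lt.mpr ⟨by linarith [hα.1], by linarith [hα.2]⟩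

lemma Gg_int {δ α : ℝ} (hδ : δ ∈ Ioo (0:ℝ) 1) (hα : α ∈ Ioo (δ - 1) (1 - δ)) :
    IntervalIntegrable (Gg δ α) volume (-1) 1 := by
  set m : ℝ := |α| + δ with hm
  have hm1 : m < 1 := by have := abs_alpha_lt hδ hα; simp only [hm]; linarith
  refine intInt (C := (Real.sqrt (1 - m ^ 2))⁻¹) (measurable_Gg δ α).aestronglyMeasurable (fun t ht => ?_)
  have hx : |α + δ * t| ≤ m :=
    abs_x_le hδ.1 (abs_le.mpr ⟨ht.1.le, ht.2⟩) (by simp [hm])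
  rw [abs_of_nonneg (Gg_nonneg δ α t)]
  exact Gg_le hx hm1

lemma tGg_int {δ α : ℝ} (hδ : δ ∈ Ioo (0:ℝ) 1) (hα : α ∈ Ioo (δ - 1) (1 - δ)) :
    IntervalIntegrable (fun t => t * Gg δ α t) volume (-1) 1 := by
  set m : ℝ := |α| + δ with hm
  have hm1 : m < 1 := by have := abs_alpha_lt hδ hα; simp only [hm]; linarith
  refine intInt (C := (Real.sqrt (1 - m ^ 2))⁻¹) ((measurable_id.mul (measurable_Gg δ α)).aestronglyMeasurable) (fun t ht => ?_)
  have habs : |t| ≤ 1 := abs_le.mpr ⟨ht.1.le, ht.2⟩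
  have hx : |α + δ * t| ≤ m :=
    abs_x_le hδ.1 habs (by simp [hm])
  rw [abs_mul, abs_of_nonneg (Gg_nonneg δ α t)]
  calc |t| * Gg δ α t ≤ 1 * ((Real.sqrt (1 - m ^ 2))⁻¹ * (Real.sqrt (1 - t ^ 2))⁻¹) :=
        mul_le_mul habs (Gg_le hx hm1) (Gg_nonneg δ α t) zero_le_one
    _ = (Real.sqrt (1 - m ^ 2))⁻¹ * (Real.sqrt (1 - t ^ 2))⁻¹ := one_mul _

lemma Gg_pos' {δ α : ℝ} (hδ : δ ∈ Ioo (0:ℝ) 1) (hα : α ∈ Ioo (δ - 1) (1 - δ))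
    {t : ℝ} (ht : t ∈ Ioo (-1:ℝ) 1) : 0 < Gg δ α t := by
  have hx : |α + δ * t| ≤ |α| + δ :=
    abs_x_le hδ.1 (abs_le.mpr ⟨ht.1.le, ht.2.le⟩) (by simp)
  have := abs_alpha_lt hδ hα
  exact Gg_pos (lt_of_le_of_lt hx (by linarith)) ht

lemma den_pos {δ α : ℝ} (hδ : δ ∈ Ioo (0:ℝ) 1) (hα : α ∈ Ioo (δ - 1) (1 - δ)) :
    0 < ∫ t in (-1:ℝ)..1, Gg δ α t :=
  intervalIntegral_pos_of_pos_on (Gg_int hδ hα) (fun t ht => Gg_pos' hδ hα ht) (by norm_num)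

/-- The key reformulation of `cpt` by the substitution `ξ = δ t + α`. -/
lemma cpt_eq {δ α : ℝ} (hδ : δ ∈ Ioo (0:ℝ) 1) (hα : α ∈ Ioo (δ - 1) (1 - δ)) :
    cpt δ α = α + δ * ((∫ t in (-1:ℝ)..1, t * Gg δ α t) / (∫ t in (-1:ℝ)..1, Gg δ α t)) := by
  have hδ0 : (0:ℝ) < δ := hδ.1
  have key : ∀ g : ℝ → ℝ, (∫ ξ in (α - δ)..(α + δ), g ξ) = δ * ∫ x in (-1:ℝ)..1, g (δ * x + α) := by
    intro g
    have h := intervalIntegral.integral_comp_mul_add (a := (-1:ℝ)) (b := 1) g (ne_of_gt hδ0) α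
    have e1 : δ * (-1) + α = α - δ := by ring
    have e2 : δ * 1 + α = α + δ := by ring
    rw [e1, e2, smul_eq_mul] at h
    rw [h]; field_simp
  have hsq : ∀ x : ℝ, Real.sqrt ((1 - (δ * x + α) ^ 2) * ((δ * x + α) - (α - δ)) * ((α + δ) - (δ * x + α)))
      = δ * Real.sqrt ((1 - (α + δ * x) ^ 2) * (1 - x ^ 2)) := by
    intro x
    have hpt : (1 - (δ * x + α) ^ 2) * ((δ * x + α) - (α - δ)) * ((α + δ) - (δ * x + α))
        = δ ^ 2 * ((1 - (α + δ * x) ^ 2) * (1 - x ^ 2)) := by ring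
    rw [hpt, Real.sqrt_mul (sq_nonneg δ), Real.sqrt_sq hδ0.le]
  have hnum : (∫ ξ in (α - δ)..(α + δ), ξ / Real.sqrt ((1 - ξ ^ 2) * (ξ - (α - δ)) * ((α + δ) - ξ)))
      = α * (∫ t in (-1:ℝ)..1, Gg δ α t) + δ * ∫ t in (-1:ℝ)..1, t * Gg δ α t := by
    rw [key]
    have e : (fun x : ℝ => (δ * x + α) / Real.sqrt ((1 - (δ * x + α) ^ 2) * ((δ * x + α) - (α - δ)) * ((α + δ) - (δ * x + α))))
        = fun x : ℝ => δ⁻¹ * ((α + δ * x) * Gg δ α x) := by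
      funext x
      rw [hsq x, div_eq_mul_inv, mul_inv]
      unfold Gg; ring
    rw [e, intervalIntegral.integral_const_mul]
    have e2 : (fun x : ℝ => (α + δ * x) * Gg δ α x)
        = fun x => α * Gg δ α x + δ * (x * Gg δ α x) := by funext x; ring
    rw [e2, intervalIntegral.integral_add ((Gg_int hδ hα).const_mul α)
      ((tGg_int hδ hα).const_mul δ), intervalIntegral.integral_const_mul,
      intervalIntegral.integral_const_mul]
    field_simp
  have hden : (∫ ξ in (α - δ)..(α + δ), 1 / Real.sqrt ((1 - ξ ^ 2) * (ξ - (α - δ)) * ((α + δ) - ξ)))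
      = ∫ t in (-1:ℝ)..1, Gg δ α t := by
    rw [key]
    have e : (fun x : ℝ => 1 / Real.sqrt ((1 - (δ * x + α) ^ 2) * ((δ * x + α) - (α - δ)) * ((α + δ) - (δ * x + α))))
        = fun x : ℝ => δ⁻¹ * Gg δ α x := by
      funext x
      rw [hsq x, one_div, mul_inv]
      unfold Gg; ring
    rw [e, intervalIntegral.integral_const_mul]
    field_simp
  have hD := den_pos hδ hα
  unfold cpt
  rw [hnum, hden]
  field_simp

/-- Pointwise derivative of `α ↦ Gg δ α t`. -/
lemma Gg_hasDeriv {δ t α : ℝ} (hx : |α + δ * t| < 1) (ht : t ∈ Ioo (-1:ℝ) 1) :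
    HasDerivAt (fun a => Gg δ a t) (ps δ α t * Gg δ α t) α := by
  have hx' := abs_lt.mp hx
  have h1 : (0:ℝ) < 1 - (α + δ * t) ^ 2 := by nlinarith [hx'.1, hx'.2]
  have h2 : (0:ℝ) < 1 - t ^ 2 := by nlinarith [ht.1, ht.2]
  have hu : (0:ℝ) < (1 - (α + δ * t) ^ 2) * (1 - t ^ 2) := mul_pos h1 h2
  have hxd : HasDerivAt (fun a : ℝ => a + δ * t) 1 α := (hasDerivAt_id α).add_const (δ * t)
  have hsqd : HasDerivAt (fun a : ℝ => (a + δ * t) ^ 2) (2 * (α + δ * t)) α := by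
    simpa using hxd.fun_pow 2
  have hud : HasDerivAt (fun a : ℝ => (1 - (a + δ * t) ^ 2) * (1 - t ^ 2))
      (-(2 * (α + δ * t)) * (1 - t ^ 2)) α := (hsqd.const_sub 1).mul_const _
  have hsd := hud.sqrt (ne_of_gt hu)
  have hspos : 0 < Real.sqrt ((1 - (α + δ * t) ^ 2) * (1 - t ^ 2)) := Real.sqrt_pos.mpr hu
  have hinv := hsd.inv (ne_of_gt hspos)
  have hs2 : Real.sqrt ((1 - (α + δ * t) ^ 2) * (1 - t ^ 2)) ^ 2
      = (1 - (α + δ * t) ^ 2) * (1 - t ^ 2) := Real.sq_sqrt hu.le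
  set S := Real.sqrt ((1 - (α + δ * t) ^ 2) * (1 - t ^ 2)) with hSdef
  refine hinv.congr_deriv ?_
  unfold ps Gg
  rw [← hSdef, hs2]
  field_simp

/-- Differentiation under the integral sign for `den` and `num`. -/
lemma main_deriv {δ α₀ : ℝ} (hδ : δ ∈ Ioo (0:ℝ) 1) (hα : α₀ ∈ Ioo (δ - 1) (1 - δ)) :
    HasDerivAt (fun α => ∫ t in (-1:ℝ)..1, Gg δ α t)
      (∫ t in (-1:ℝ)..1, ps δ α₀ t * Gg δ α₀ t) α₀ ∧
    HasDerivAt (fun α => ∫ t in (-1:ℝ)..1, t * Gg δ α t)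
      (∫ t in (-1:ℝ)..1, t * (ps δ α₀ t * Gg δ α₀ t)) α₀ := by
  obtain ⟨hδ0, hδ1⟩ := hδ
  set ε : ℝ := min (α₀ - (δ - 1)) ((1 - δ) - α₀) / 2 with hεdef
  have hε : 0 < ε := by
    have h1 : 0 < α₀ - (δ - 1) := by linarith [hα.1]
    have h2 : 0 < (1 - δ) - α₀ := by linarith [hα.2]
    have := lt_min h1 h2
    positivity
  set m : ℝ := 1 - ε with hmdef
  have hm1 : m < 1 := by simp [hmdef]; linarith
  have hεsmall : ε < 1 := by
    have h2 : (1 - δ) - α₀ ≤ 2 - 2 * δ := by linarith [hα.1]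
    have := min_le_right (α₀ - (δ - 1)) ((1 - δ) - α₀)
    simp only [hεdef]
    linarith
  have hm0 : 0 < m := by simp only [hmdef]; linarith
  have hball : ∀ α ∈ Metric.ball α₀ ε, |α| ≤ m - δ := by
    intro α hαb
    rw [Metric.mem_ball, Real.dist_eq] at hαb
    have e1 : 2 * ε ≤ α₀ - (δ - 1) := by
      have := min_le_left (α₀ - (δ - 1)) ((1 - δ) - α₀); simp only [hεdef] at *; linarith
    have e2 : 2 * ε ≤ (1 - δ) - α₀ := by
      have := min_le_right (α₀ - (δ - 1)) ((1 - δ) - α₀); simp only [hεdef] at *; linarith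
    have := abs_lt.mp hαb
    rw [abs_le]
    constructor <;> simp only [hmdef] <;> nlinarith
  have hxm : ∀ α ∈ Metric.ball α₀ ε, ∀ t ∈ Set.uIoc (-1:ℝ) 1, |α + δ * t| ≤ m := by
    intro α hαb t htI
    rw [Set.uIoc_of_le (by norm_num : (-1:ℝ) ≤ 1)] at htI
    exact abs_x_le hδ0 (abs_le.mpr ⟨htI.1.le, htI.2⟩) (hball α hαb)
  set C : ℝ := (m / (1 - m ^ 2)) * (Real.sqrt (1 - m ^ 2))⁻¹ with hCdef
  have hbound_int : IntervalIntegrable (fun t : ℝ => C * (Real.sqrt (1 - t ^ 2))⁻¹)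
      volume (-1) 1 := w_int.const_mul C
  have hae1 : ∀ᵐ t : ℝ ∂volume, t ≠ 1 := by
    refine ae_iff.mpr ?_
    have he : {t : ℝ | ¬ t ≠ 1} = {1} := by ext t; simp
    rw [he]; exact measure_singleton 1
  have hbd : ∀ᵐ t : ℝ ∂volume, t ∈ Set.uIoc (-1:ℝ) 1 → ∀ α ∈ Metric.ball α₀ ε,
      ‖ps δ α t * Gg δ α t‖ ≤ C * (Real.sqrt (1 - t ^ 2))⁻¹ := by
    filter_upwards with t htI α hαb
    have hxle := hxm α hαb t htI
    rw [norm_eq_abs, abs_mul, abs_of_nonneg (Gg_nonneg δ α t)]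
    have h1m : (0:ℝ) < 1 - m ^ 2 := by nlinarith
    calc |ps δ α t| * Gg δ α t
        ≤ (m / (1 - m ^ 2)) * ((Real.sqrt (1 - m ^ 2))⁻¹ * (Real.sqrt (1 - t ^ 2))⁻¹) := by
          apply mul_le_mul (ps_le hxle hm1) (Gg_le hxle hm1) (Gg_nonneg δ α t)
          positivity
      _ = C * (Real.sqrt (1 - t ^ 2))⁻¹ := by rw [hCdef]; ring
  have hdiff : ∀ᵐ t : ℝ ∂volume, t ∈ Set.uIoc (-1:ℝ) 1 → ∀ α ∈ Metric.ball α₀ ε,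
      HasDerivAt (fun a => Gg δ a t) (ps δ α t * Gg δ α t) α := by
    filter_upwards [hae1] with t ht1 htI α hαb
    rw [Set.uIoc_of_le (by norm_num : (-1:ℝ) ≤ 1)] at htI
    have htIoo : t ∈ Ioo (-1:ℝ) 1 := ⟨htI.1, lt_of_le_of_ne htI.2 ht1⟩
    exact Gg_hasDeriv (lt_of_le_of_lt (hxm α hαb t (by rw [Set.uIoc_of_le (by norm_num : (-1:ℝ) ≤ 1)]; exact htI)) hm1) htIoo
  constructor
  · exact (intervalIntegral.hasDerivAt_integral_of_dominated_loc_of_deriv_le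
      (F := fun α t => Gg δ α t) (F' := fun α t => ps δ α t * Gg δ α t) (Metric.ball_mem_nhds α₀ hε)
      (Eventually.of_forall fun α => (measurable_Gg δ α).aestronglyMeasurable)
      (Gg_int ⟨hδ0, hδ1⟩ hα)
      ((measurable_ps δ α₀).mul (measurable_Gg δ α₀)).aestronglyMeasurable
      hbd hbound_int hdiff).2
  · refine (intervalIntegral.hasDerivAt_integral_of_dominated_loc_of_deriv_le
      (F := fun α t => t * Gg δ α t) (F' := fun α t => t * (ps δ α t * Gg δ α t)) (Metric.ball_mem_nhds α₀ hε)
      (Eventually.of_forall fun α => (measurable_id.mul (measurable_Gg δ α)).aestronglyMeasurable)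
      (tGg_int ⟨hδ0, hδ1⟩ hα)
      (measurable_id.mul ((measurable_ps δ α₀).mul (measurable_Gg δ α₀))).aestronglyMeasurable
      ?_ hbound_int ?_).2
    · filter_upwards [hbd] with t hb htI α hαb
      have h1t : |t| ≤ 1 := by
        rw [Set.uIoc_of_le (by norm_num : (-1:ℝ) ≤ 1)] at htI
        exact abs_le.mpr ⟨htI.1.le, htI.2⟩
      calc ‖t * (ps δ α t * Gg δ α t)‖ = |t| * ‖ps δ α t * Gg δ α t‖ := by
            rw [norm_mul, norm_eq_abs]
        _ ≤ 1 * (C * (Real.sqrt (1 - t ^ 2))⁻¹) :=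
            mul_le_mul h1t (hb htI α hαb) (norm_nonneg _) zero_le_one
        _ = C * (Real.sqrt (1 - t ^ 2))⁻¹ := one_mul _
    · filter_upwards [hdiff] with t hd htI α hαb
      exact (hd htI α hαb).const_mul t

lemma x_lt_one {δ α t : ℝ} (hδ : δ ∈ Ioo (0:ℝ) 1) (hα : α ∈ Ioo (δ - 1) (1 - δ))
    (ht : |t| ≤ 1) : |α + δ * t| < 1 := by
  have hx : |α + δ * t| ≤ |α| + δ := abs_x_le hδ.1 ht (by simp)
  have := abs_alpha_lt hδ hα
  linarith

lemma Hg_int {δ α : ℝ} (hδ : δ ∈ Ioo (0:ℝ) 1) (hα : α ∈ Ioo (δ - 1) (1 - δ)) :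
    IntervalIntegrable (fun t => ps δ α t * Gg δ α t) volume (-1) 1 := by
  set m : ℝ := |α| + δ with hm
  have hm1 : m < 1 := by have := abs_alpha_lt hδ hα; simp only [hm]; linarith
  refine intInt (C := (m / (1 - m ^ 2)) * (Real.sqrt (1 - m ^ 2))⁻¹)
    ((measurable_ps δ α).mul (measurable_Gg δ α)).aestronglyMeasurable (fun t ht => ?_)
  have hx : |α + δ * t| ≤ m :=
    abs_x_le hδ.1 (abs_le.mpr ⟨ht.1.le, ht.2⟩) (by simp [hm])
  rw [abs_mul, abs_of_nonneg (Gg_nonneg δ α t)]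
  have h1m : (0:ℝ) < 1 - m ^ 2 := by
    have : 0 ≤ m := le_trans (abs_nonneg _) hx
    nlinarith
  calc |ps δ α t| * Gg δ α t
      ≤ (m / (1 - m ^ 2)) * ((Real.sqrt (1 - m ^ 2))⁻¹ * (Real.sqrt (1 - t ^ 2))⁻¹) := by
        apply mul_le_mul (ps_le hx hm1) (Gg_le hx hm1) (Gg_nonneg δ α t)
        exact div_nonneg (le_trans (abs_nonneg _) hx) h1m.le
    _ = (m / (1 - m ^ 2)) * (Real.sqrt (1 - m ^ 2))⁻¹ * (Real.sqrt (1 - t ^ 2))⁻¹ := by ring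

lemma tHg_int {δ α : ℝ} (hδ : δ ∈ Ioo (0:ℝ) 1) (hα : α ∈ Ioo (δ - 1) (1 - δ)) :
    IntervalIntegrable (fun t => t * (ps δ α t * Gg δ α t)) volume (-1) 1 := by
  refine (Hg_int hδ hα).mono_fun
    (measurable_id.mul ((measurable_ps δ α).mul (measurable_Gg δ α))).aestronglyMeasurable ?_
  filter_upwards [ae_restrict_mem measurableSet_uIoc] with t ht
  rw [uIoc_of_le (by norm_num : (-1:ℝ) ≤ 1)] at ht
  have h1t : |t| ≤ 1 := abs_le.mpr ⟨ht.1.le, ht.2⟩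
  simp only [norm_eq_abs]
  rw [abs_mul]
  calc |t| * |ps δ α t * Gg δ α t| ≤ 1 * |ps δ α t * Gg δ α t| :=
        mul_le_mul_of_nonneg_right h1t (abs_nonneg _)
    _ = |ps δ α t * Gg δ α t| := one_mul _

/-- The Chebyshev-correlation positivity. -/
lemma X_pos {δ α : ℝ} (hδ : δ ∈ Ioo (0:ℝ) 1) (hα : α ∈ Ioo (δ - 1) (1 - δ)) :
    0 < (∫ t in (-1:ℝ)..1, t * (ps δ α t * Gg δ α t)) * (∫ t in (-1:ℝ)..1, Gg δ α t)
      - (∫ t in (-1:ℝ)..1, t * Gg δ α t) * (∫ t in (-1:ℝ)..1, ps δ α t * Gg δ α t) := by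
  set μ : Measure ℝ := volume.restrict (Ioo (-1:ℝ) 1) with hμ
  have conv : ∀ f : ℝ → ℝ, (∫ t in (-1:ℝ)..1, f t) = ∫ t, f t ∂μ := by
    intro f
    rw [intervalIntegral.integral_of_le (by norm_num : (-1:ℝ) ≤ 1),
      integral_Ioc_eq_integral_Ioo]
  have hGi : Integrable (fun t => Gg δ α t) μ :=
    (intervalIntegrable_iff_integrableOn_Ioo_of_le (by norm_num)).mp (Gg_int hδ hα)
  have htGi : Integrable (fun t => t * Gg δ α t) μ :=
    (intervalIntegrable_iff_integrableOn_Ioo_of_le (by norm_num)).mp (tGg_int hδ hα)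
  have hHi : Integrable (fun t => ps δ α t * Gg δ α t) μ :=
    (intervalIntegrable_iff_integrableOn_Ioo_of_le (by norm_num)).mp (Hg_int hδ hα)
  have htHi : Integrable (fun t => t * (ps δ α t * Gg δ α t)) μ :=
    (intervalIntegrable_iff_integrableOn_Ioo_of_le (by norm_num)).mp (tHg_int hδ hα)
  set φ : ℝ × ℝ → ℝ := fun z =>
    (z.1 * (ps δ α z.1 * Gg δ α z.1)) * Gg δ α z.2
      - (z.1 * Gg δ α z.1) * (ps δ α z.2 * Gg δ α z.2) with hφ
  have hφi : Integrable φ (μ.prod μ) := (htHi.mul_prod hGi).sub (htGi.mul_prod hHi)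
  have hφint : ∫ z, φ z ∂(μ.prod μ)
      = (∫ t, t * (ps δ α t * Gg δ α t) ∂μ) * (∫ t, Gg δ α t ∂μ)
        - (∫ t, t * Gg δ α t ∂μ) * (∫ t, ps δ α t * Gg δ α t ∂μ) := by
    rw [hφ, integral_sub (htHi.mul_prod hGi) (htGi.mul_prod hHi),
      integral_prod_mul (f := fun t => t * (ps δ α t * Gg δ α t)) (g := fun t => Gg δ α t),
      integral_prod_mul (f := fun t => t * Gg δ α t) (g := fun t => ps δ α t * Gg δ α t)]
  have hswap : ∫ z, φ z.swap ∂(μ.prod μ) = ∫ z, φ z ∂(μ.prod μ) := integral_prod_swap φ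
  set ρ : ℝ × ℝ → ℝ := fun z =>
    (z.1 - z.2) * (ps δ α z.1 - ps δ α z.2) * (Gg δ α z.1 * Gg δ α z.2) with hρ
  have hρe : ρ = fun z => φ z + (φ ∘ Prod.swap) z := by
    funext z
    simp only [hρ, hφ, Function.comp, Prod.fst_swap, Prod.snd_swap]
    ring
  have hρi : Integrable ρ (μ.prod μ) := by rw [hρe]; exact hφi.add hφi.swap
  have hρint : ∫ z, ρ z ∂(μ.prod μ) = 2 * ∫ z, φ z ∂(μ.prod μ) := by
    rw [hρe, integral_add hφi hφi.swap]
    have : ∫ z, (φ ∘ Prod.swap) z ∂(μ.prod μ) = ∫ z, φ z ∂(μ.prod μ) := hswap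
    rw [this]; ring
  have hres : μ.prod μ = (volume.prod volume).restrict ((Ioo (-1:ℝ) 1) ×ˢ (Ioo (-1:ℝ) 1)) :=
    Measure.prod_restrict _ _
  have hae : ∀ᵐ z ∂(μ.prod μ), z ∈ (Ioo (-1:ℝ) 1) ×ˢ (Ioo (-1:ℝ) 1) := by
    rw [hres]
    exact ae_restrict_mem (measurableSet_Ioo.prod measurableSet_Ioo)
  have hsign : ∀ z : ℝ × ℝ, z.1 ∈ Ioo (-1:ℝ) 1 → z.2 ∈ Ioo (-1:ℝ) 1 → z.1 ≠ z.2 → 0 < ρ z := by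
    intro z h1 h2 hne
    have hx1 : |α + δ * z.1| < 1 := x_lt_one hδ hα (abs_le.mpr ⟨h1.1.le, h1.2.le⟩)
    have hx2 : |α + δ * z.2| < 1 := x_lt_one hδ hα (abs_le.mpr ⟨h2.1.le, h2.2.le⟩)
    have hG : 0 < Gg δ α z.1 * Gg δ α z.2 :=
      mul_pos (Gg_pos hx1 h1) (Gg_pos hx2 h2)
    rcases lt_or_gt_of_ne hne with h | h
    · have := ps_mono hδ.1 h hx1 hx2
      have : 0 < (z.1 - z.2) * (ps δ α z.1 - ps δ α z.2) :=
        mul_pos_of_neg_of_neg (by linarith) (by linarith)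
      simp only [hρ]
      exact mul_pos this hG
    · have := ps_mono hδ.1 h hx2 hx1
      have : 0 < (z.1 - z.2) * (ps δ α z.1 - ps δ α z.2) :=
        mul_pos (by linarith) (by linarith)
      simp only [hρ]
      exact mul_pos this hG
  have hnn : 0 ≤ᵐ[μ.prod μ] ρ := by
    filter_upwards [hae] with z hz
    rcases eq_or_ne z.1 z.2 with h | h
    · simp [hρ, h]
    · exact (hsign z hz.1 hz.2 h).le
  have hpos : 0 < ∫ z, ρ z ∂(μ.prod μ) := by
    rw [integral_pos_iff_support_of_nonneg_ae hnn hρi]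
    have hsub : (Ioo (-1:ℝ) 0) ×ˢ (Ioo (0:ℝ) 1) ⊆ Function.support ρ := by
      intro z hz
      have h1 : z.1 ∈ Ioo (-1:ℝ) 1 := ⟨hz.1.1, lt_trans hz.1.2 zero_lt_one⟩
      have h2 : z.2 ∈ Ioo (-1:ℝ) 1 := ⟨lt_trans (by norm_num) hz.2.1, hz.2.2⟩
      exact (hsign z h1 h2 (ne_of_lt (lt_trans hz.1.2 hz.2.1))).ne'
    refine lt_of_lt_of_le ?_ (measure_mono hsub)
    rw [Measure.prod_prod, hμ, Measure.restrict_apply measurableSet_Ioo,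
      Measure.restrict_apply measurableSet_Ioo]
    have e1 : Ioo (-1:ℝ) 0 ∩ Ioo (-1:ℝ) 1 = Ioo (-1:ℝ) 0 := by
      apply inter_eq_left.mpr; intro x hx; exact ⟨hx.1, lt_trans hx.2 zero_lt_one⟩
    have e2 : Ioo (0:ℝ) 1 ∩ Ioo (-1:ℝ) 1 = Ioo (0:ℝ) 1 := by
      apply inter_eq_left.mpr; intro x hx; exact ⟨lt_trans (by norm_num) hx.1, hx.2⟩
    rw [e1, e2, Real.volume_Ioo, Real.volume_Ioo]
    norm_num
  have hφpos : 0 < ∫ z, φ z ∂(μ.prod μ) := by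
    rw [hρint] at hpos; linarith
  rw [conv, conv, conv, conv]
  rw [hφint] at hφpos
  linarith

/-- The derivative of `cpt δ` at a point of the gap interval: existence and lower bound. -/
lemma cpt_deriv {δ α₀ : ℝ} (hδ : δ ∈ Ioo (0:ℝ) 1) (hα : α₀ ∈ Ioo (δ - 1) (1 - δ)) :
    ∃ d : ℝ, HasDerivAt (cpt δ) d α₀ ∧ 1 < d := by
  obtain ⟨hD', hN'⟩ := main_deriv hδ hα
  have hD := den_pos hδ hα
  have hq : HasDerivAt (fun α => α + δ * ((∫ t in (-1:ℝ)..1, t * Gg δ α t) /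
      (∫ t in (-1:ℝ)..1, Gg δ α t)))
      (1 + δ * (((∫ t in (-1:ℝ)..1, t * (ps δ α₀ t * Gg δ α₀ t)) * (∫ t in (-1:ℝ)..1, Gg δ α₀ t)
        - (∫ t in (-1:ℝ)..1, t * Gg δ α₀ t) * (∫ t in (-1:ℝ)..1, ps δ α₀ t * Gg δ α₀ t))
          / (∫ t in (-1:ℝ)..1, Gg δ α₀ t) ^ 2)) α₀ :=
    (hasDerivAt_id α₀).add ((hN'.div hD' (ne_of_gt hD)).const_mul δ)
  have heq : cpt δ =ᶠ[nhds α₀] fun α => α + δ * ((∫ t in (-1:ℝ)..1, t * Gg δ α t) /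
      (∫ t in (-1:ℝ)..1, Gg δ α t)) := by
    filter_upwards [Ioo_mem_nhds hα.1 hα.2] with α hα' using cpt_eq hδ hα'
  refine ⟨_, hq.congr_of_eventuallyEq heq, ?_⟩
  have hX := X_pos hδ hα
  have hpos : 0 < δ * (((∫ t in (-1:ℝ)..1, t * (ps δ α₀ t * Gg δ α₀ t)) * (∫ t in (-1:ℝ)..1, Gg δ α₀ t)
        - (∫ t in (-1:ℝ)..1, t * Gg δ α₀ t) * (∫ t in (-1:ℝ)..1, ps δ α₀ t * Gg δ α₀ t))
          / (∫ t in (-1:ℝ)..1, Gg δ α₀ t) ^ 2) := by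
    apply mul_pos hδ.1
    exact div_pos hX (by positivity)
  linarith

end CptAux

/-- `α ↦ c(α)` is differentiable on `(δ−1, 1−δ)` with `c'(α) > 1`
for `α ∈ (δ−1, 0)`. -/
theorem critical_point_derivative_exceeds_one (δ : ℝ) (hδ : δ ∈ Ioo (0 : ℝ) 1) :
    (∀ α ∈ Ioo (δ - 1) (1 - δ), DifferentiableAt ℝ (cpt δ) α) ∧
    (∀ α ∈ Ioo (δ - 1) (0 : ℝ), 1 < deriv (cpt δ) α) := by
  constructor
  · intro α hα
    obtain ⟨d, hd, _⟩ := CptAux.cpt_deriv hδ hα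
    exact hd.differentiableAt
  · intro α hα
    have hα' : α ∈ Ioo (δ - 1) (1 - δ) := ⟨hα.1, by linarith [hα.2, hδ.2]⟩
    obtain ⟨d, hd, h1⟩ := CptAux.cpt_deriv hδ hα'
    rw [hd.deriv]
    exact h1
end
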